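/- arXiv:1002.2971 — 10 statements merged into one kernel-verified Lean document; each statement's English description precedes it below -/
import Mathlib

section
/- Let X1, ..., Xn be pairwise independent Bernoulli random variables (taking values in {0,1}) such that P(X1 = X2 = ... = Xn = 0) ≥ 1/2. Then (1/n) · Σ_{i=1}^n P(Xi = 0) ≥ 1 − 2/n. -/
open MeasureTheory

theorem stmt_0 {Ω : Type*} [MeasurableSpace Ω] (μ : Measure Ω) [IsProbabilityMeasure μ]
    (n : ℕ) (hn : 0 < n) (X : Fin n → Ω → Bool)
    (hmeas : ∀ i, Measurable (X i))
    (hindep : ∀ i j, i ≠ j → ∀ a b : Bool,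
      μ ({ω | X i ω = a} ∩ {ω | X j ω = b}) = μ {ω | X i ω = a} * μ {ω | X j ω = b})
    (h0 : (1 : ℝ)/2 ≤ (μ {ω | ∀ i, X i ω = false}).toReal) :
    1 - 2/(n : ℝ) ≤ (1/(n : ℝ)) * ∑ i, (μ {ω | X i ω = false}).toReal := by
  classical
  set A : Fin n → Set Ω := fun i => {ω | X i ω = true} with hA_def
  have hA : ∀ i, MeasurableSet (A i) := fun i =>
    (hmeas i) (measurableSet_singleton true)
  set p : Fin n → ℝ := fun i => (μ (A i)).toReal with hp_def
  have hp_nonneg : ∀ i, 0 ≤ p i := fun i => ENNReal.toReal_nonneg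
  set m : ℝ := ∑ i, p i with hm_def
  have hm_nonneg : 0 ≤ m := Finset.sum_nonneg fun i _ => hp_nonneg i
  set S : Ω → ℝ := fun ω => ∑ i, (A i).indicator (fun _ => (1:ℝ)) ω with hS_def
  have hS_int : Integrable S μ :=
    integrable_finset_sum _ fun i _ => (integrable_const (1:ℝ)).indicator (hA i)
  have hS_eq : ∫ ω, S ω ∂μ = m := by
    rw [hS_def, integral_finset_sum _ fun i _ => (integrable_const (1:ℝ)).indicator (hA i)]
    refine Finset.sum_congr rfl fun i _ => ?_
    rw [integral_indicator_const (1:ℝ) (hA i)]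
    simp [hp_def]
    rfl
  -- S^2 as a double sum of indicators
  have hSsq : (fun ω => S ω ^ 2) =
      fun ω => ∑ i, ∑ j, (A i ∩ A j).indicator (fun _ => (1:ℝ)) ω := by
    funext ω
    rw [sq, hS_def]
    rw [Finset.sum_mul_sum]
    refine Finset.sum_congr rfl fun i _ => Finset.sum_congr rfl fun j _ => ?_
    rw [← Set.inter_indicator_mul]
    simp
  have hS2_int : Integrable (fun ω => S ω ^ 2) μ := by
    rw [hSsq]
    exact integrable_finset_sum _ fun i _ => integrable_finset_sum _ fun j _ =>
      (integrable_const (1:ℝ)).indicator ((hA i).inter (hA j))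
  have hS2_eq : ∫ ω, S ω ^ 2 ∂μ = ∑ i, ∑ j, (μ (A i ∩ A j)).toReal := by
    rw [hSsq, integral_finset_sum _ fun i _ => integrable_finset_sum _ fun j _ =>
      (integrable_const (1:ℝ)).indicator ((hA i).inter (hA j))]
    refine Finset.sum_congr rfl fun i _ => ?_
    rw [integral_finset_sum _ fun j _ => (integrable_const (1:ℝ)).indicator ((hA i).inter (hA j))]
    refine Finset.sum_congr rfl fun j _ => ?_
    rw [integral_indicator_const (1:ℝ) ((hA i).inter (hA j))]
    simp
    rfl
  -- bound the second moment
  have hmu_lt_top : ∀ i, μ (A i) ≠ ⊤ := fun i => measure_ne_top μ _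
  have hS2_le : ∫ ω, S ω ^ 2 ∂μ ≤ m + m ^ 2 := by
    rw [hS2_eq]
    have hle : ∀ i ∈ Finset.univ, ∑ j, (μ (A i ∩ A j)).toReal ≤
        p i + ∑ j, p i * p j := by
      intro i _
      have : ∀ j ∈ Finset.univ, (μ (A i ∩ A j)).toReal ≤
          (if j = i then p i else 0) + p i * p j := by
        intro j _
        by_cases hij : j = i
        · subst hij
          simp only [Set.inter_self]
          rw [if_pos trivial]
          show p j ≤ p j + p j * p j
          nlinarith [hp_nonneg j]
        · rw [if_neg hij]
          have := hindep i j (fun h => hij h.symm) true true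
          rw [hA_def]
          simp only []
          rw [this, ENNReal.toReal_mul]
          simp [hp_def]
          exact le_rfl
      calc ∑ j, (μ (A i ∩ A j)).toReal
          ≤ ∑ j, ((if j = i then p i else 0) + p i * p j) :=
            Finset.sum_le_sum this
        _ = p i + ∑ j, p i * p j := by
            rw [Finset.sum_add_distrib, Finset.sum_ite_eq' Finset.univ i (fun _ => p i)]
            simp
    calc ∑ i, ∑ j, (μ (A i ∩ A j)).toReal
        ≤ ∑ i, (p i + ∑ j, p i * p j) := Finset.sum_le_sum hle
      _ = m + m ^ 2 := by
          rw [Finset.sum_add_distrib, ← hm_def, sq, Finset.sum_mul]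
          congr 1
          exact Finset.sum_congr rfl fun i _ => by rw [Finset.mul_sum]
  -- the all-false event
  set F : Set Ω := {ω | ∀ i, X i ω = false} with hF_def
  have hF_meas : MeasurableSet F := by
    have : F = ⋂ i, X i ⁻¹' {false} := by ext ω; simp [hF_def]
    rw [this]
    exact MeasurableSet.iInter fun i => (hmeas i) (measurableSet_singleton false)
  have hS_zero : ∀ ω ∈ F, S ω = 0 := by
    intro ω hω
    rw [hS_def]
    refine Finset.sum_eq_zero fun i _ => ?_
    apply Set.indicator_of_notMem
    simp only [hA_def, Set.mem_setOf_eq]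
    rw [hω i]
    simp
  -- Chebyshev-type bound
  have hvar_int : Integrable (fun ω => (S ω - m) ^ 2) μ := by
    have : (fun ω => (S ω - m) ^ 2) = fun ω => S ω ^ 2 - (2*m) * S ω + m ^ 2 := by
      funext ω; ring
    rw [this]
    exact (hS2_int.sub (hS_int.const_mul (2*m))).add (integrable_const _)
  have hvar_eq : ∫ ω, (S ω - m) ^ 2 ∂μ = (∫ ω, S ω ^ 2 ∂μ) - m ^ 2 := by
    have h1 : (fun ω => (S ω - m) ^ 2) = fun ω => (S ω ^ 2 - (2*m) * S ω) + m ^ 2 := by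
      funext ω; ring
    have hint1 : Integrable (fun ω => S ω ^ 2 - (2*m) * S ω) μ := by
      exact hS2_int.sub (hS_int.const_mul (2*m))
    rw [h1, integral_add hint1 (integrable_const _),
      integral_sub hS2_int (hS_int.const_mul (2*m)), integral_const_mul, hS_eq,
      integral_const]
    simp [measure_univ]
    ring
  have hlower : m ^ 2 * (μ F).toReal ≤ ∫ ω, (S ω - m) ^ 2 ∂μ := by
    have hind : ∀ ω, F.indicator (fun _ => m ^ 2) ω ≤ (S ω - m) ^ 2 := by
      intro ω
      by_cases hω : ω ∈ F
      · rw [Set.indicator_of_mem hω, hS_zero ω hω]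
        nlinarith
      · rw [Set.indicator_of_notMem hω]
        positivity
    calc m ^ 2 * (μ F).toReal = ∫ ω, F.indicator (fun _ => m ^ 2) ω ∂μ := by
          rw [integral_indicator_const (m^2) hF_meas]; simp [mul_comm]; exact Or.inl rfl
      _ ≤ ∫ ω, (S ω - m) ^ 2 ∂μ :=
          integral_mono ((integrable_const _).indicator hF_meas) hvar_int hind
  -- conclude m ≤ 2
  have hm_le : m ≤ 2 := by
    have h1 : m ^ 2 * (1/2) ≤ m ^ 2 * (μ F).toReal := by
      apply mul_le_mul_of_nonneg_left h0 (by positivity)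
    have h2 : m ^ 2 * (1/2) ≤ m := by
      calc m ^ 2 * (1/2) ≤ ∫ ω, (S ω - m) ^ 2 ∂μ := le_trans h1 hlower
        _ = (∫ ω, S ω ^ 2 ∂μ) - m ^ 2 := hvar_eq
        _ ≤ (m + m ^ 2) - m ^ 2 := by linarith [hS2_le]
        _ = m := by ring
    nlinarith
  -- rewrite P(X_i = false)
  have hfalse : ∀ i, (μ {ω | X i ω = false}).toReal = 1 - p i := by
    intro i
    have hset : {ω | X i ω = false} = (A i)ᶜ := by
      ext ω; simp [hA_def]
    rw [hset, prob_compl_eq_one_sub (hA i),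
      ENNReal.toReal_sub_of_le prob_le_one ENNReal.one_ne_top]
    simp [hp_def]
  have hsum : ∑ i, (μ {ω | X i ω = false}).toReal = (n : ℝ) - m := by
    rw [Finset.sum_congr rfl fun i _ => hfalse i, Finset.sum_sub_distrib]
    simp [hm_def]
  rw [hsum]
  have hn' : (0:ℝ) < n := by exact_mod_cast hn
  have heq : (1/(n:ℝ)) * ((n:ℝ) - m) = 1 - m/(n:ℝ) := by field_simp
  rw [heq]
  have : m / (n:ℝ) ≤ 2 / (n:ℝ) := by gcongr
  linarith
end

section
/- Let X1, X2, X3 be pairwise independent Bernoulli random variables (values in {0,1}) with P(X1 = X2 = X3 = 0) ≥ 1/2, and suppose P(X1 = 0) < 1 and P(X2 = 0) < 1. Let p = max(P(X1 = 0), P(X2 = 0)). Then P(X3 = 0) ≥ 1/2 + p(1−p)/(2p−1). -/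
open MeasureTheory

lemma pairwise_key (a b q e r : ℝ) (ha' : 0 ≤ a) (hb' : 0 ≤ b) (ha : a < 1) (hb : b < 1)
    (he : 1/2 ≤ e)
    (heab : e ≤ a*b) (heq : e ≤ q) (hrab : r ≤ (1-a)*(1-b))
    (hsum : (1-a)*q + (1-b)*q + e = q + r) :
    1/2 + (max a b) * (1 - max a b) / (2 * max a b - 1) ≤ q := by
  have hab : 1/2 ≤ a*b := le_trans he heab
  have ha2 : 1/2 < a := by nlinarith
  have hb2 : 1/2 < b := by nlinarith
  have hq : 1/2 ≤ q := le_trans he heq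
  rcases max_cases a b with ⟨hm, hba⟩ | ⟨hm, hab'⟩ <;> rw [hm]
  · have h2a : (0:ℝ) < 2*a - 1 := by linarith
    have key : a*(1-a) ≤ (q - 1/2)*(2*a-1) := by
      nlinarith [mul_nonneg (sub_nonneg.2 hba) (by linarith : (0:ℝ) ≤ q + a - 1)]
    linarith [(div_le_iff₀ h2a).2 key]
  · have hba : a ≤ b := le_of_lt hab'
    have h2b : (0:ℝ) < 2*b - 1 := by linarith
    have key : b*(1-b) ≤ (q - 1/2)*(2*b-1) := by
      nlinarith [mul_nonneg (sub_nonneg.2 hba) (by linarith : (0:ℝ) ≤ q + b - 1)]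
    linarith [(div_le_iff₀ h2b).2 key]

theorem stmt_1 {Ω : Type*} [MeasurableSpace Ω] (μ : Measure Ω) [IsProbabilityMeasure μ]
    (X₁ X₂ X₃ : Ω → Bool)
    (h₁ : Measurable X₁) (h₂ : Measurable X₂) (h₃ : Measurable X₃)
    (hindep₁₂ : ∀ a b : Bool, μ ({ω | X₁ ω = a} ∩ {ω | X₂ ω = b}) =
      μ {ω | X₁ ω = a} * μ {ω | X₂ ω = b})
    (hindep₁₃ : ∀ a b : Bool, μ ({ω | X₁ ω = a} ∩ {ω | X₃ ω = b}) =
      μ {ω | X₁ ω = a} * μ {ω | X₃ ω = b})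
    (hindep₂₃ : ∀ a b : Bool, μ ({ω | X₂ ω = a} ∩ {ω | X₃ ω = b}) =
      μ {ω | X₂ ω = a} * μ {ω | X₃ ω = b})
    (h0 : (1 : ℝ)/2 ≤ (μ {ω | X₁ ω = false ∧ X₂ ω = false ∧ X₃ ω = false}).toReal)
    (hp₁ : (μ {ω | X₁ ω = false}).toReal < 1)
    (hp₂ : (μ {ω | X₂ ω = false}).toReal < 1) :
    1/2 + (max (μ {ω | X₁ ω = false}).toReal (μ {ω | X₂ ω = false}).toReal)
        * (1 - max (μ {ω | X₁ ω = false}).toReal (μ {ω | X₂ ω = false}).toReal)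
        / (2 * max (μ {ω | X₁ ω = false}).toReal (μ {ω | X₂ ω = false}).toReal - 1)
      ≤ (μ {ω | X₃ ω = false}).toReal := by
  have splitX : ∀ (X : Ω → Bool), Measurable X → ∀ S : Set Ω,
      μ S = μ (S ∩ {ω | X ω = false}) + μ (S ∩ {ω | X ω = true}) := by
    intro X hX S
    have hpre : X ⁻¹' {false} = {ω | X ω = false} := by ext ω; simp
    have hset : S \ X ⁻¹' {false} = S ∩ {ω | X ω = true} := by
      ext ω; simp [Bool.not_eq_false]
    rw [← measure_inter_add_diff S (hX (measurableSet_singleton false)), hset, hpre]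
  have fin : ∀ s : Set Ω, μ s ≠ ⊤ := fun s => measure_ne_top μ s
  set Af := {ω | X₁ ω = false} with hAf
  set At := {ω | X₁ ω = true} with hAt
  set Bf := {ω | X₂ ω = false} with hBf
  set Bt := {ω | X₂ ω = true} with hBt
  set C := {ω | X₃ ω = false} with hC
  set E := {ω | X₁ ω = false ∧ X₂ ω = false ∧ X₃ ω = false} with hE
  -- complements add to 1
  have h1tot : μ Af + μ At = 1 := by
    have := splitX X₁ h₁ Set.univ
    simpa [Set.univ_inter] using this.symm
  have h2tot : μ Bf + μ Bt = 1 := by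
    have := splitX X₂ h₂ Set.univ
    simpa [Set.univ_inter] using this.symm
  have hAtr : (μ At).toReal = 1 - (μ Af).toReal := by
    have := congrArg ENNReal.toReal h1tot
    rw [ENNReal.toReal_add (fin _) (fin _)] at this
    simp at this; linarith
  have hBtr : (μ Bt).toReal = 1 - (μ Bf).toReal := by
    have := congrArg ENNReal.toReal h2tot
    rw [ENNReal.toReal_add (fin _) (fin _)] at this
    simp at this; linarith
  -- E as intersection
  have hEset : E = Af ∩ Bf ∩ C := by
    ext ω
    simp only [hE, hAf, hBf, hC, Set.mem_setOf_eq, Set.mem_inter_iff]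
    tauto
  -- e ≤ a*b
  have heab : (μ E).toReal ≤ (μ Af).toReal * (μ Bf).toReal := by
    rw [← ENNReal.toReal_mul, ← hindep₁₂ false false]
    exact ENNReal.toReal_mono (fin _)
      (measure_mono (by rw [hEset]; exact Set.inter_subset_left))
  -- e ≤ q
  have heq : (μ E).toReal ≤ (μ C).toReal :=
    ENNReal.toReal_mono (fin _)
      (measure_mono (by rw [hEset]; exact Set.inter_subset_right))
  -- r ≤ (1-a)(1-b)
  have hrab : (μ (At ∩ Bt ∩ C)).toReal ≤ (1 - (μ Af).toReal) * (1 - (μ Bf).toReal) := by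
    rw [← hAtr, ← hBtr, ← ENNReal.toReal_mul, ← hindep₁₂ true true]
    exact ENNReal.toReal_mono (fin _) (measure_mono Set.inter_subset_left)
  -- decompositions
  have e1 : μ (At ∩ C) = μ (At ∩ Bf ∩ C) + μ (At ∩ Bt ∩ C) := by
    have s1 : (At ∩ C) ∩ Bf = At ∩ Bf ∩ C := by
      ext ω; simp only [Set.mem_inter_iff]; tauto
    have s2 : (At ∩ C) ∩ Bt = At ∩ Bt ∩ C := by
      ext ω; simp only [Set.mem_inter_iff]; tauto
    rw [splitX X₂ h₂ (At ∩ C), s1, s2]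
  have e2 : μ (Bt ∩ C) = μ (Af ∩ Bt ∩ C) + μ (At ∩ Bt ∩ C) := by
    have s1 : (Bt ∩ C) ∩ Af = Af ∩ Bt ∩ C := by
      ext ω; simp only [Set.mem_inter_iff]; tauto
    have s2 : (Bt ∩ C) ∩ At = At ∩ Bt ∩ C := by
      ext ω; simp only [Set.mem_inter_iff]; tauto
    rw [splitX X₁ h₁ (Bt ∩ C), s1, s2]
  have e3 : μ C = μ (Af ∩ Bf ∩ C) + μ (Af ∩ Bt ∩ C) + μ (At ∩ Bf ∩ C) + μ (At ∩ Bt ∩ C) := by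
    have s1 : (C ∩ Af) ∩ Bf = Af ∩ Bf ∩ C := by
      ext ω; simp only [Set.mem_inter_iff]; tauto
    have s2 : (C ∩ Af) ∩ Bt = Af ∩ Bt ∩ C := by
      ext ω; simp only [Set.mem_inter_iff]; tauto
    have s3 : (C ∩ At) ∩ Bf = At ∩ Bf ∩ C := by
      ext ω; simp only [Set.mem_inter_iff]; tauto
    have s4 : (C ∩ At) ∩ Bt = At ∩ Bt ∩ C := by
      ext ω; simp only [Set.mem_inter_iff]; tauto
    rw [splitX X₁ h₁ C, splitX X₂ h₂ (C ∩ Af), splitX X₂ h₂ (C ∩ At), s1, s2, s3, s4]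
    ring
  -- the key ENNReal identity
  have hENN : μ (At ∩ C) + μ (Bt ∩ C) + μ E = μ C + μ (At ∩ Bt ∩ C) := by
    rw [e1, e2, e3, hEset]
    ring
  -- convert to reals
  have hAC : (μ (At ∩ C)).toReal = (1 - (μ Af).toReal) * (μ C).toReal := by
    rw [← hAtr, ← ENNReal.toReal_mul, ← hindep₁₃ true false]
  have hBC : (μ (Bt ∩ C)).toReal = (1 - (μ Bf).toReal) * (μ C).toReal := by
    rw [← hBtr, ← ENNReal.toReal_mul, ← hindep₂₃ true false]
  have hsum : (1 - (μ Af).toReal) * (μ C).toReal + (1 - (μ Bf).toReal) * (μ C).toReal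
      + (μ E).toReal = (μ C).toReal + (μ (At ∩ Bt ∩ C)).toReal := by
    have := congrArg ENNReal.toReal hENN
    rw [ENNReal.toReal_add (by exact ENNReal.add_ne_top.2 ⟨fin _, fin _⟩) (fin _),
      ENNReal.toReal_add (fin _) (fin _), ENNReal.toReal_add (fin _) (fin _)] at this
    rw [← hAC, ← hBC]
    linarith
  exact pairwise_key (μ Af).toReal (μ Bf).toReal (μ C).toReal (μ E).toReal
    (μ (At ∩ Bt ∩ C)).toReal ENNReal.toReal_nonneg ENNReal.toReal_nonneg
    hp₁ hp₂ h0 heab heq hrab hsum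
end

section
/- Let X1, X2, X3, X4 be pairwise independent Bernoulli random variables (values in {0,1}) such that P(X1 = X2 = X3 = X4 = 0) ≥ 1/2. Then Σ_{i=1}^4 P(Xi = 0) ≥ 3. -/
open MeasureTheory Finset

lemma key (m : (Fin 4 → Bool) → ℝ) (hnn : ∀ v, 0 ≤ m v)
    (hsum : ∑ v, m v = 1)
    (h0 : (1:ℝ)/2 ≤ m (fun _ => false))
    (hind : ∀ i j : Fin 4, i ≠ j →
      (∑ v, if v i = true ∧ v j = true then m v else 0)
        = (∑ v, if v i = true then m v else 0) * (∑ v, if v j = true then m v else 0)) :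
    (3:ℝ) ≤ ∑ i : Fin 4, ∑ v, if v i = false then m v else 0 := by
  classical
  set c0 : Fin 4 → Bool := fun _ => false with hc0
  set q : Fin 4 → ℝ := fun i => ∑ v, if v i = true then m v else 0 with hq
  have hpq : ∀ i : Fin 4, (∑ v, if v i = false then m v else 0) = 1 - q i := by
    intro i
    have : (∑ v, if v i = false then m v else 0) + q i = 1 := by
      rw [hq, ← Finset.sum_add_distrib, ← hsum]
      apply Finset.sum_congr rfl
      intro v _
      cases h : v i <;> simp [h]
    linarith
  have hqle : ∀ i : Fin 4, q i ≤ 1/2 := by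
    intro i
    have hle : m c0 ≤ ∑ v, if v i = false then m v else 0 := by
      have := Finset.single_le_sum (f := fun v => if v i = false then m v else 0)
        (fun v _ => by split; exacts [hnn v, le_rfl]) (Finset.mem_univ c0)
      simpa [hc0] using this
    have := hpq i
    linarith
  -- indicator functions
  set e : (Fin 4 → Bool) → Fin 4 → ℝ := fun v i => if v i = true then 1 else 0 with he
  set S : (Fin 4 → Bool) → ℝ := fun v => ∑ i, e v i with hS
  have hE1 : ∑ v, m v * S v = ∑ i, q i := by
    rw [hS]
    simp only [Finset.mul_sum]
    rw [Finset.sum_comm]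
    apply Finset.sum_congr rfl
    intro i _
    apply Finset.sum_congr rfl
    intro v _
    simp [he, hq, mul_ite]
  have hE2 : ∑ v, m v * (S v)^2 = ∑ i, ∑ j, ∑ v, if v i = true ∧ v j = true then m v else 0 := by
    have h1 : ∀ v, m v * (S v)^2 = ∑ i, ∑ j, (if v i = true ∧ v j = true then m v else 0) := by
      intro v
      rw [sq, hS, Finset.sum_mul_sum, Finset.mul_sum]
      apply Finset.sum_congr rfl
      intro i _
      rw [Finset.mul_sum]
      apply Finset.sum_congr rfl
      intro j _
      by_cases hi : v i = true <;> by_cases hj : v j = true <;> simp [he, hi, hj]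
    rw [Finset.sum_congr rfl (fun v _ => h1 v), Finset.sum_comm]
    apply Finset.sum_congr rfl
    intro i _
    exact Finset.sum_comm
  have hSc0 : S c0 = 0 := by simp [hS, he, hc0]
  -- pointwise square nonneg
  have hpt : 0 ≤ ∑ v, m v * (S v - 2 * (if v = c0 then 0 else 1))^2 :=
    Finset.sum_nonneg fun v _ => mul_nonneg (hnn v) (sq_nonneg _)
  have hexp : ∑ v, m v * (S v - 2 * (if v = c0 then 0 else 1))^2
      = ∑ v, m v * (S v)^2 - 4 * ∑ v, m v * S v + 4 * (1 - m c0) := by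
    have h2 : ∀ v, m v * (S v - 2 * (if v = c0 then 0 else 1))^2
        = m v * (S v)^2 - 4 * (m v * S v) + 4 * (if v = c0 then 0 else m v) := by
      intro v
      by_cases hv : v = c0
      · subst hv; simp [hSc0]
      · simp only [if_neg hv]; ring
    rw [Finset.sum_congr rfl (fun v _ => h2 v)]
    rw [Finset.sum_add_distrib, Finset.sum_sub_distrib, ← Finset.mul_sum, ← Finset.mul_sum]
    have h3 : ∑ v, (if v = c0 then 0 else m v) = 1 - m c0 := by
      have : ∀ v : Fin 4 → Bool, (if v = c0 then 0 else m v) = m v - (if v = c0 then m v else 0) := by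
        intro v; split <;> simp
      rw [Finset.sum_congr rfl (fun v _ => this v), Finset.sum_sub_distrib, hsum,
        Finset.sum_ite_eq' Finset.univ c0 m, if_pos (Finset.mem_univ c0)]
    rw [h3]
  -- diagonal / off-diagonal
  have hdiag : ∀ i : Fin 4, (∑ v, if v i = true ∧ v i = true then m v else 0) = q i := by
    intro i; simp [hq]
  have hoff : ∀ i j : Fin 4, i ≠ j → (∑ v, if v i = true ∧ v j = true then m v else 0) = q i * q j :=
    fun i j hij => hind i j hij
  have hmain : 0 ≤ (∑ i, q i) + (∑ i, ∑ j ∈ Finset.univ.erase i, q i * q j)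
      - 4 * (∑ i, q i) + 4 * (1 - m c0) := by
    have hE2' : ∑ v, m v * (S v)^2 = (∑ i, q i) + ∑ i, ∑ j ∈ Finset.univ.erase i, q i * q j := by
      rw [hE2]
      have : ∀ i : Fin 4, ∑ j, (∑ v, if v i = true ∧ v j = true then m v else 0)
          = q i + ∑ j ∈ Finset.univ.erase i, q i * q j := by
        intro i
        rw [← Finset.add_sum_erase _ _ (Finset.mem_univ i), hdiag i]
        congr 1
        apply Finset.sum_congr rfl
        intro j hj
        exact hoff i j (Ne.symm (Finset.ne_of_mem_erase hj))
      rw [Finset.sum_congr rfl (fun i _ => this i), Finset.sum_add_distrib]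
    rw [hexp, hE1, hE2'] at hpt
    linarith
  -- reduce goal
  have hgoal : ∑ i : Fin 4, ∑ v, (if v i = false then m v else 0) = 4 - ∑ i, q i := by
    simp only [hpq]
    rw [Finset.sum_sub_distrib]
    simp
  have e0 := hqle 0; have e1 := hqle 1; have e2 := hqle 2; have e3 := hqle 3
  have fq : ∀ i : Fin 4, 0 ≤ q i := fun i =>
    Finset.sum_nonneg fun v _ => by by_cases h : v i = true <;> simp [h, hnn v]
  have f0 := fq 0
  have f1 := fq 1
  have f2 := fq 2
  have f3 := fq 3
  have h4 : ∀ i : Fin 4, ∑ j ∈ Finset.univ.erase i, q i * q j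
      = q i * ((q 0 + q 1 + q 2 + q 3) - q i) := by
    intro i
    rw [← Finset.mul_sum, Finset.sum_erase_eq_sub (Finset.mem_univ i), Fin.sum_univ_four]
  rw [Finset.sum_congr rfl (fun i _ => h4 i)] at hmain
  simp only [Fin.sum_univ_four] at hmain
  rw [hgoal, Fin.sum_univ_four]
  nlinarith [hmain, h0, sq_nonneg (q 0 - q 1), sq_nonneg (q 0 - q 2), sq_nonneg (q 0 - q 3),
    sq_nonneg (q 1 - q 2), sq_nonneg (q 1 - q 3), sq_nonneg (q 2 - q 3),
    sq_nonneg (q 0 + q 1 + q 2 + q 3 - 2)]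

theorem stmt_2 {Ω : Type*} [MeasurableSpace Ω] (μ : Measure Ω) [IsProbabilityMeasure μ]
    (X : Fin 4 → Ω → Bool)
    (hmeas : ∀ i, Measurable (X i))
    (hindep : ∀ i j, i ≠ j → ∀ a b : Bool,
      μ ({ω | X i ω = a} ∩ {ω | X j ω = b}) = μ {ω | X i ω = a} * μ {ω | X j ω = b})
    (h0 : (1 : ℝ)/2 ≤ (μ {ω | ∀ i, X i ω = false}).toReal) :
    (3 : ℝ) ≤ ∑ i, (μ {ω | X i ω = false}).toReal := by
  classical
  set Y : Ω → (Fin 4 → Bool) := fun ω i => X i ω with hYdef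
  have hYmeas : Measurable Y := measurable_pi_lambda _ hmeas
  set m : (Fin 4 → Bool) → ℝ := fun v => (μ (Y ⁻¹' {v})).toReal with hm
  have hnn : ∀ v, 0 ≤ m v := fun v => ENNReal.toReal_nonneg
  have hfib : ∀ v : Fin 4 → Bool, MeasurableSet (Y ⁻¹' {v}) :=
    fun v => hYmeas (measurableSet_singleton v)
  have hset : ∀ s : Finset (Fin 4 → Bool), (μ (Y ⁻¹' ↑s)).toReal = ∑ v ∈ s, m v := by
    intro s
    rw [← sum_measure_preimage_singleton s (fun v _ => hfib v),
      ENNReal.toReal_sum (fun v _ => measure_ne_top μ _)]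
  have hone : ∀ (i : Fin 4) (a : Bool),
      {ω | X i ω = a} = Y ⁻¹' ↑(Finset.univ.filter fun v : Fin 4 → Bool => v i = a) := by
    intro i a
    ext ω
    simp [hYdef]
  have hsum : ∑ v, m v = 1 := by
    have := hset Finset.univ
    simpa using this.symm
  have h0' : (1:ℝ)/2 ≤ m (fun _ => false) := by
    have hs : {ω | ∀ i, X i ω = false} = Y ⁻¹' {fun _ => false} := by
      ext ω
      simp [hYdef, funext_iff]
    rw [hs] at h0
    exact h0
  have hind : ∀ i j : Fin 4, i ≠ j →
      (∑ v, if v i = true ∧ v j = true then m v else 0)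
        = (∑ v, if v i = true then m v else 0) * (∑ v, if v j = true then m v else 0) := by
    intro i j hij
    have h2 : {ω | X i ω = true} ∩ {ω | X j ω = true}
        = Y ⁻¹' ↑(Finset.univ.filter fun v : Fin 4 → Bool => v i = true ∧ v j = true) := by
      ext ω
      simp [hYdef]
    have := hindep i j hij true true
    rw [h2, hone i true, hone j true] at this
    have h3 := congrArg ENNReal.toReal this
    rw [ENNReal.toReal_mul, hset, hset, hset] at h3
    rw [← Finset.sum_filter, ← Finset.sum_filter, ← Finset.sum_filter]
    exact h3
  have hkey := key m hnn hsum h0' hind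
  refine le_trans hkey (le_of_eq ?_)
  apply Finset.sum_congr rfl
  intro i _
  rw [hone i false, hset, Finset.sum_filter]
end

section
/- For real numbers p1, ..., pn ∈ [0,1] satisfying ∏_{j ∈ S} p_j ≥ 1/2 for every subset S ⊆ {1,...,n} of size k, if (1 − 1/n)^k ≤ 1/2 then Σ_{j=1}^n p_j ≥ n − 1. -/
open Finset

theorem stmt_3 (n k : ℕ) (hk : 1 ≤ k) (hkn : k ≤ n) (p : Fin n → ℝ)
    (hp : ∀ j, p j ∈ Set.Icc (0 : ℝ) 1)
    (hprod : ∀ S : Finset (Fin n), S.card = k → (1 : ℝ)/2 ≤ ∏ j ∈ S, p j)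
    (hnk : (1 - 1/(n : ℝ))^k ≤ 1/2) :
    (n : ℝ) - 1 ≤ ∑ j, p j := by
  have hn : 1 ≤ n := le_trans hk hkn
  have hnR : (1:ℝ) ≤ (n:ℝ) := by exact_mod_cast hn
  have hk0 : (k : ℝ) ≠ 0 := by
    have : (0:ℝ) < k := by exact_mod_cast hk
    linarith
  set c : ℝ := (1/2 : ℝ) ^ ((k:ℝ)⁻¹) with hc
  have hc0 : 0 < c := Real.rpow_pos_of_pos (by norm_num) _
  have hcn : (1 : ℝ) - 1/(n:ℝ) ≤ c := by
    have h0 : (0:ℝ) ≤ 1 - 1/(n:ℝ) := by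
      have : (1:ℝ)/n ≤ 1 := by
        rw [div_le_one (by linarith)]; exact hnR
      linarith
    have h := Real.rpow_le_rpow (by positivity) hnk
      (by positivity : (0:ℝ) ≤ (k:ℝ)⁻¹)
    rwa [← Real.rpow_natCast (1 - 1/(n:ℝ)) k, ← Real.rpow_mul h0,
      mul_inv_cancel₀ hk0, Real.rpow_one] at h
  -- sorted version
  set σ := Tuple.sort p with hσ
  set q : Fin n → ℝ := p ∘ σ with hqdef
  have hmono : Monotone q := Tuple.monotone_sort p
  have hq01 : ∀ j, 0 ≤ q j ∧ q j ≤ 1 := fun j => (hp (σ j) : _)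
  have hqprod : ∀ S : Finset (Fin n), S.card = k → (1:ℝ)/2 ≤ ∏ j ∈ S, q j := by
    intro S hS
    have h := hprod (S.map σ.toEmbedding) (by rw [card_map, hS])
    rwa [prod_map] at h
  have hsum : ∑ j, q j = ∑ j, p j := Equiv.sum_comp σ p
  -- the first k indices
  set S : Finset (Fin n) := (univ : Finset (Fin k)).map (Fin.castLEEmb hkn)
    with hSdef
  have hScard : S.card = k := by simp [hSdef]
  have hmemS : ∀ j : Fin n, j ∈ S ↔ (j : ℕ) < k := by
    intro j
    simp only [hSdef, mem_map, mem_univ, true_and]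
    constructor
    · rintro ⟨i, rfl⟩; exact i.isLt
    · intro hj; exact ⟨⟨(j:ℕ), hj⟩, by ext; simp [Fin.castLE]⟩
  -- AM-GM on S
  have hSsum : (k:ℝ) * c ≤ ∑ j ∈ S, q j := by
    have hgm := Real.geom_mean_le_arith_mean_weighted S (fun _ => (k:ℝ)⁻¹) q
      (fun i _ => by positivity) (by
        rw [Finset.sum_const, hScard, nsmul_eq_mul, mul_inv_cancel₀ hk0])
      (fun i _ => (hq01 i).1)
    have hprodS : c ≤ ∏ i ∈ S, q i ^ ((k:ℝ)⁻¹) := by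
      rw [Real.finset_prod_rpow S q (fun i _ => (hq01 i).1)]
      exact Real.rpow_le_rpow (by norm_num) (hqprod S hScard) (by positivity)
    have hsum' : ∑ i ∈ S, (k:ℝ)⁻¹ * q i = (k:ℝ)⁻¹ * ∑ i ∈ S, q i := by
      rw [Finset.mul_sum]
    have := le_trans hprodS (le_trans hgm (le_of_eq hsum'))
    calc (k:ℝ) * c ≤ (k:ℝ) * ((k:ℝ)⁻¹ * ∑ i ∈ S, q i) := by
          apply mul_le_mul_of_nonneg_left this (by positivity)
      _ = ∑ i ∈ S, q i := by field_simp
    -- fix: need goal form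
  -- complement bound
  have hcompl : ∀ j ∈ Sᶜ, c ≤ q j := by
    intro j hj
    rw [mem_compl, hmemS, not_lt] at hj
    have hpow : (1:ℝ)/2 ≤ q j ^ k := by
      have hle : ∏ i ∈ S, q i ≤ ∏ i ∈ S, q j := by
        apply Finset.prod_le_prod (fun i _ => (hq01 i).1)
        intro i hi
        rw [hmemS] at hi
        exact hmono (by rw [Fin.le_def]; omega)
      rw [Finset.prod_const, hScard] at hle
      exact le_trans (hqprod S hScard) hle
    have h := Real.rpow_le_rpow (by norm_num) hpow
      (by positivity : (0:ℝ) ≤ (k:ℝ)⁻¹)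
    rwa [← Real.rpow_natCast (q j) k, ← Real.rpow_mul (hq01 j).1,
      mul_inv_cancel₀ hk0, Real.rpow_one] at h
  have hcomplSum : ((n - k : ℕ) : ℝ) * c ≤ ∑ j ∈ Sᶜ, q j := by
    have hcard : Sᶜ.card = n - k := by
      rw [Finset.card_compl, hScard]; simp
    have := Finset.card_nsmul_le_sum Sᶜ q c hcompl
    rwa [hcard, nsmul_eq_mul] at this
  have htotal : (n:ℝ) * c ≤ ∑ j, q j := by
    rw [← Finset.sum_add_sum_compl S q]
    have hcast : ((n - k : ℕ) : ℝ) = (n:ℝ) - (k:ℝ) := by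
      rw [Nat.cast_sub hkn]
    nlinarith [hSsum, hcomplSum]
  rw [← hsum]
  have : (n:ℝ) * (1 - 1/(n:ℝ)) ≤ (n:ℝ) * c :=
    mul_le_mul_of_nonneg_left hcn (by linarith)
  have hne : (n:ℝ) ≠ 0 := by linarith
  have heq : (n:ℝ) * (1 - 1/(n:ℝ)) = (n:ℝ) - 1 := by field_simp
  linarith
end

section
/- Let X be uniform on {+,−}, and let X1, X2, X3, X4 be erased versions of X (taking values in {+,−,0}, never contradicting X). If I(Xi; Xj) = 0 for all i ≠ j, then Σ_{i=1}^4 P(Xi = 0) ≥ 3. -/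
open MeasureTheory

/-- Shannon entropy (base 2) of a finite-alphabet random variable. -/
noncomputable def entropy {Ω : Type*} [MeasurableSpace Ω] {α : Type*} [Fintype α]
    (μ : Measure Ω) (X : Ω → α) : ℝ :=
  -∑ a : α, (μ (X ⁻¹' {a})).toReal * Real.logb 2 (μ (X ⁻¹' {a})).toReal

instance : MeasurableSpace (Option Bool) := ⊤
instance : MeasurableSingletonClass (Option Bool) := ⟨fun _ => trivial⟩

section helpers
lemma gibbs_eq {γ δ : Type*} [Fintype γ] [Fintype δ]
    (r : γ → δ → ℝ) (q1 : γ → ℝ) (q2 : δ → ℝ)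
    (hr : ∀ y z, 0 ≤ r y z)
    (hq1 : ∀ y, q1 y = ∑ z, r y z) (hq2 : ∀ z, q2 z = ∑ y, r y z)
    (htot : ∑ y, ∑ z, r y z = 1)
    (hI : (-∑ y, q1 y * Real.logb 2 (q1 y)) + (-∑ z, q2 z * Real.logb 2 (q2 z))
        - (-∑ y, ∑ z, r y z * Real.logb 2 (r y z)) = 0) :
    ∀ y z, r y z = q1 y * q2 z := by
  have hq1nn : ∀ y, 0 ≤ q1 y := fun y => (hq1 y) ▸ Finset.sum_nonneg (fun z _ => hr y z)
  have hq2nn : ∀ z, 0 ≤ q2 z := fun z => (hq2 z) ▸ Finset.sum_nonneg (fun y _ => hr y z)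
  have hq1r : ∀ y z, r y z ≤ q1 y := by
    intro y z; rw [hq1]
    exact Finset.single_le_sum (fun z _ => hr y z) (Finset.mem_univ z)
  have hq2r : ∀ y z, r y z ≤ q2 z := by
    intro y z; rw [hq2]
    exact Finset.single_le_sum (fun y _ => hr y z) (Finset.mem_univ y)
  -- rewrite hI as a double sum
  set F : γ → δ → ℝ := fun y z => r y z * (Real.log (r y z) - Real.log (q1 y) - Real.log (q2 z)) with hF
  have hsum1 : ∑ y, q1 y * Real.logb 2 (q1 y) = ∑ y, ∑ z, r y z * Real.logb 2 (q1 y) := by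
    apply Finset.sum_congr rfl; intro y _
    rw [hq1, Finset.sum_mul]
  have hsum2 : ∑ z, q2 z * Real.logb 2 (q2 z) = ∑ y, ∑ z, r y z * Real.logb 2 (q2 z) := by
    rw [Finset.sum_comm]
    apply Finset.sum_congr rfl; intro z _
    rw [hq2, Finset.sum_mul]
  have hIF : ∑ y, ∑ z, F y z = 0 := by
    have h2 : (0:ℝ) < Real.log 2 := Real.log_pos (by norm_num)
    have key : ∀ y z, F y z = (r y z * Real.logb 2 (r y z) - r y z * Real.logb 2 (q1 y)
        - r y z * Real.logb 2 (q2 z)) * Real.log 2 := by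
      intro y z
      simp only [hF, Real.logb]
      field_simp
    have : ∑ y, ∑ z, F y z = (∑ y, ∑ z, r y z * Real.logb 2 (r y z)
        - ∑ y, ∑ z, r y z * Real.logb 2 (q1 y) - ∑ y, ∑ z, r y z * Real.logb 2 (q2 z)) * Real.log 2 := by
      simp only [key, ← Finset.sum_mul]
      congr 1
      simp only [Finset.sum_sub_distrib, Finset.sum_mul]
    rw [this, ← hsum1, ← hsum2]
    have : -∑ y, q1 y * Real.logb 2 (q1 y) + -∑ z, q2 z * Real.logb 2 (q2 z)
        - -∑ y, ∑ z, r y z * Real.logb 2 (r y z)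
        = ∑ y, ∑ z, r y z * Real.logb 2 (r y z) - ∑ y, q1 y * Real.logb 2 (q1 y)
          - ∑ z, q2 z * Real.logb 2 (q2 z) := by ring
    rw [this] at hI
    rw [hI, zero_mul]
  -- G = F - (r - q1*q2) is nonneg with total sum 0
  set G : γ → δ → ℝ := fun y z => F y z - (r y z - q1 y * q2 z) with hG
  have hGnn : ∀ y z, 0 ≤ G y z := by
    intro y z
    rcases eq_or_lt_of_le (hr y z) with h0 | hpos
    · simp [hG, hF, ← h0]
      exact mul_nonneg (hq1nn y) (hq2nn z)
    · have hq1p : 0 < q1 y := lt_of_lt_of_le hpos (hq1r y z)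
      have hq2p : 0 < q2 z := lt_of_lt_of_le hpos (hq2r y z)
      have hx : 0 < q1 y * q2 z / r y z := by positivity
      have hlog := Real.log_le_sub_one_of_pos hx
      rw [Real.log_div (by positivity) (ne_of_gt hpos), Real.log_mul (ne_of_gt hq1p) (ne_of_gt hq2p)] at hlog
      have := mul_le_mul_of_nonneg_left hlog (le_of_lt hpos)
      simp only [hG, hF]
      have hr' : r y z * (q1 y * q2 z / r y z - 1) = q1 y * q2 z - r y z := by
        field_simp
      nlinarith [this]
  have hGsum : ∑ y, ∑ z, G y z = 0 := by
    have hq1tot : ∑ y, q1 y = 1 := by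
      rw [← htot]; exact Finset.sum_congr rfl (fun y _ => hq1 y)
    have hq2tot : ∑ z, q2 z = 1 := by
      rw [Finset.sum_comm] at htot
      rw [← htot]; exact Finset.sum_congr rfl (fun z _ => hq2 z)
    have hqq : ∑ y, ∑ z, q1 y * q2 z = 1 := by
      rw [← Finset.sum_mul_sum, hq1tot, hq2tot, one_mul]
    have : ∑ y, ∑ z, G y z = ∑ y, ∑ z, F y z - (∑ y, ∑ z, r y z) + ∑ y, ∑ z, q1 y * q2 z := by
      simp only [hG, Finset.sum_sub_distrib]
      ring
    rw [this, hIF, htot, hqq]; ring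
  have hGzero : ∀ y z, G y z = 0 := by
    intro y z
    have h1 : ∀ y ∈ Finset.univ, (0:ℝ) ≤ ∑ z, G y z :=
      fun y _ => Finset.sum_nonneg (fun z _ => hGnn y z)
    have h2 := (Finset.sum_eq_zero_iff_of_nonneg h1).mp hGsum y (Finset.mem_univ y)
    exact (Finset.sum_eq_zero_iff_of_nonneg (fun z _ => hGnn y z)).mp h2 z (Finset.mem_univ z)
  intro y z
  rcases eq_or_lt_of_le (hr y z) with h0 | hpos
  · have h := hGzero y z
    simp only [hG, hF] at h
    rw [← h0] at h
    rw [← h0]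
    ring_nf at h
    linarith
  · by_contra hne
    have hq1p : 0 < q1 y := lt_of_lt_of_le hpos (hq1r y z)
    have hq2p : 0 < q2 z := lt_of_lt_of_le hpos (hq2r y z)
    have hx : 0 < q1 y * q2 z / r y z := by positivity
    have hx1 : q1 y * q2 z / r y z ≠ 1 := by
      intro h
      apply hne
      field_simp at h
      linarith
    have hlog := Real.log_lt_sub_one_of_pos hx hx1
    rw [Real.log_div (by positivity) (ne_of_gt hpos), Real.log_mul (ne_of_gt hq1p) (ne_of_gt hq2p)] at hlog
    have hlt := mul_lt_mul_of_pos_left hlog hpos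
    have hG0 := hGzero y z
    simp only [hG, hF] at hG0
    have hr' : r y z * (q1 y * q2 z / r y z - 1) = q1 y * q2 z - r y z := by field_simp
    rw [hr'] at hlt
    ring_nf at hlt hG0
    linarith

lemma measure_partition {Ω : Type*} [MeasurableSpace Ω] (μ : Measure Ω)
    {β : Type*} [Fintype β] [MeasurableSpace β] [MeasurableSingletonClass β]
    (Z : Ω → β) (hZ : Measurable Z) (A : Set Ω) (hA : MeasurableSet A) :
    μ A = ∑ z, μ (A ∩ Z ⁻¹' {z}) := by
  have hU : A = ⋃ z, A ∩ Z ⁻¹' {z} := by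
    ext ω; simp
  have hdisj : Pairwise (Function.onFun Disjoint (fun z => A ∩ Z ⁻¹' {z})) := by
    intro z1 z2 hne
    apply Set.disjoint_left.mpr
    rintro ω ⟨_, h1⟩ ⟨_, h2⟩
    simp only [Set.mem_preimage, Set.mem_singleton_iff] at h1 h2
    exact hne (h1 ▸ h2 ▸ rfl)
  calc μ A = μ (⋃ z, A ∩ Z ⁻¹' {z}) := by rw [← hU]
    _ = ∑' z, μ (A ∩ Z ⁻¹' {z}) :=
        measure_iUnion hdisj (fun z => hA.inter (hZ (measurableSet_singleton z)))
    _ = ∑ z, μ (A ∩ Z ⁻¹' {z}) := tsum_fintype _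


lemma key_bound {Ω : Type*} [MeasurableSpace Ω] (μ : Measure Ω) [IsProbabilityMeasure μ]
    (T : Set Ω) (hT : MeasurableSet T) (hTμ : (μ T).toReal = 1/2)
    (E : Fin 4 → Set Ω) (hE : ∀ i, MeasurableSet (E i)) (hnull : ∀ i, μ (E i \ T) = 0)
    (hind : ∀ i j, i ≠ j → (μ (E i ∩ E j)).toReal = (μ (E i)).toReal * (μ (E j)).toReal) :
    ∑ i, (μ (E i)).toReal ≤ 1 := by
  set a : Fin 4 → ℝ := fun i => (μ (E i)).toReal with ha
  have hbound : ∀ i, a i ≤ 1/2 := by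
    intro i
    have hsub : E i ⊆ T ∪ (E i \ T) := by
      intro ω h
      by_cases hω : ω ∈ T
      · exact Or.inl hω
      · exact Or.inr ⟨h, hω⟩
    have h1 : μ (E i) ≤ μ T := by
      calc μ (E i) ≤ μ (T ∪ (E i \ T)) := measure_mono hsub
        _ ≤ μ T + μ (E i \ T) := measure_union_le _ _
        _ = μ T := by rw [hnull i, add_zero]
    rw [← hTμ]
    exact ENNReal.toReal_mono (measure_ne_top μ T) h1
  have htriple : ∀ i j k, i ≠ j → i ≠ k → j ≠ k →
      a i + a j + a k ≤ 1/2 + (a i * a j + a i * a k + a j * a k) := by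
    intro i j k hij hik hjk
    -- inclusion-exclusion steps in ℝ≥0∞
    have s1 : μ (E i ∪ E j) + μ (E i ∩ E j) = μ (E i) + μ (E j) :=
      measure_union_add_inter _ (hE j)
    have s2 : μ (E i ∪ E j ∪ E k) + μ ((E i ∪ E j) ∩ E k) = μ (E i ∪ E j) + μ (E k) :=
      measure_union_add_inter _ (hE k)
    have s3 : μ ((E i ∪ E j) ∩ E k) ≤ μ (E i ∩ E k) + μ (E j ∩ E k) := by
      rw [Set.union_inter_distrib_right]
      exact measure_union_le _ _
    have s4 : μ (E i ∪ E j ∪ E k) ≤ μ T := by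
      have hsub : E i ∪ E j ∪ E k ⊆ T ∪ ((E i \ T) ∪ (E j \ T) ∪ (E k \ T)) := by
        intro ω h
        by_cases hω : ω ∈ T
        · exact Or.inl hω
        · rcases h with (h | h) | h
          · exact Or.inr (Or.inl (Or.inl ⟨h, hω⟩))
          · exact Or.inr (Or.inl (Or.inr ⟨h, hω⟩))
          · exact Or.inr (Or.inr ⟨h, hω⟩)
      have h0 : μ ((E i \ T) ∪ (E j \ T) ∪ (E k \ T)) = 0 :=
        measure_union_null (measure_union_null (hnull i) (hnull j)) (hnull k)
      calc μ (E i ∪ E j ∪ E k) ≤ μ (T ∪ ((E i \ T) ∪ (E j \ T) ∪ (E k \ T))) := measure_mono hsub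
        _ ≤ μ T + μ ((E i \ T) ∪ (E j \ T) ∪ (E k \ T)) := measure_union_le _ _
        _ = μ T := by rw [h0, add_zero]
    -- convert to reals
    have fin : ∀ s : Set Ω, μ s ≠ ⊤ := fun s => measure_ne_top μ s
    have r1 : (μ (E i ∪ E j)).toReal + (μ (E i ∩ E j)).toReal = a i + a j := by
      rw [← ENNReal.toReal_add (fin _) (fin _), s1, ENNReal.toReal_add (fin _) (fin _)]
    have r2 : (μ (E i ∪ E j ∪ E k)).toReal + (μ ((E i ∪ E j) ∩ E k)).toReal
        = (μ (E i ∪ E j)).toReal + a k := by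
      rw [← ENNReal.toReal_add (fin _) (fin _), s2, ENNReal.toReal_add (fin _) (fin _)]
    have r3 : (μ ((E i ∪ E j) ∩ E k)).toReal ≤ (μ (E i ∩ E k)).toReal + (μ (E j ∩ E k)).toReal := by
      rw [← ENNReal.toReal_add (fin _) (fin _)]
      exact ENNReal.toReal_mono (ENNReal.add_ne_top.mpr ⟨fin _, fin _⟩) s3
    have r4 : (μ (E i ∪ E j ∪ E k)).toReal ≤ 1/2 := by
      rw [← hTμ]; exact ENNReal.toReal_mono (fin _) s4
    have e1 := hind i j hij
    have e2 := hind i k hik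
    have e3 := hind j k hjk
    rw [e1] at r1; rw [e2, e3] at r3
    linarith
  have hnn : ∀ i, 0 ≤ a i := fun i => ENNReal.toReal_nonneg
  have h1 := htriple 0 1 2 (by decide) (by decide) (by decide)
  have h2 := htriple 0 1 3 (by decide) (by decide) (by decide)
  have h3 := htriple 0 2 3 (by decide) (by decide) (by decide)
  have h4 := htriple 1 2 3 (by decide) (by decide) (by decide)
  have hg : ∑ i, a i = a 0 + a 1 + a 2 + a 3 := by
    simp [Fin.sum_univ_four]
  rw [hg]
  nlinarith [sq_nonneg (a 0 - a 1), sq_nonneg (a 0 - a 2), sq_nonneg (a 0 - a 3),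
    sq_nonneg (a 1 - a 2), sq_nonneg (a 1 - a 3), sq_nonneg (a 2 - a 3),
    sq_nonneg (a 0 + a 1 + a 2 + a 3 - 1), sq_nonneg (a 0 + a 1 + a 2 + a 3 - 2),
    hnn 0, hnn 1, hnn 2, hnn 3, hbound 0, hbound 1, hbound 2, hbound 3, h1, h2, h3, h4]

end helpers

/-- Lemma `cases_n=4_k=2`: `X` uniform on `{+,−}` (`Bool`, `true = +`), `X₁,…,X₄` erased
versions of `X` (values in `Option Bool`, `none` = erasure, never contradicting `X`) with
pairwise mutual information `I(Xᵢ;Xⱼ) = 0` for `i ≠ j`.  Then `∑ᵢ P(Xᵢ = 0) ≥ 3`. -/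
theorem stmt_10 {Ω : Type*} [MeasurableSpace Ω] (μ : Measure Ω) [IsProbabilityMeasure μ]
    (X : Ω → Bool) (hX : Measurable X) (hunif : μ {ω | X ω = true} = 1/2)
    (Xe : Fin 4 → Ω → Option Bool) (hXe : ∀ i, Measurable (Xe i))
    (herased : ∀ i, μ {ω | Xe i ω = some true ∧ X ω = false} = 0 ∧
      μ {ω | Xe i ω = some false ∧ X ω = true} = 0)
    (hindep : ∀ i j, i ≠ j →
      entropy μ (Xe i) + entropy μ (Xe j) - entropy μ (fun ω => (Xe i ω, Xe j ω)) = 0) :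
    (3 : ℝ) ≤ ∑ i, (μ {ω | Xe i ω = none}).toReal := by
  classical
  set P : Fin 4 → Option Bool → ℝ := fun i y => (μ (Xe i ⁻¹' {y})).toReal with hP
  set a : Fin 4 → ℝ := fun i => P i (some true) with haf
  set b : Fin 4 → ℝ := fun i => P i (some false) with hbf
  set p : Fin 4 → ℝ := fun i => P i none with hpf
  have msS : ∀ i (y : Option Bool), MeasurableSet (Xe i ⁻¹' {y}) :=
    fun i y => hXe i (measurableSet_singleton y)
  have msT : ∀ t : Bool, MeasurableSet (X ⁻¹' {t}) := fun t => hX (measurableSet_singleton t)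
  have fin : ∀ s : Set Ω, μ s ≠ ⊤ := fun s => measure_ne_top μ s
  -- marginals
  have hmarg : ∀ i j (y : Option Bool), (μ (Xe i ⁻¹' {y})).toReal
      = ∑ z : Option Bool, (μ (Xe i ⁻¹' {y} ∩ Xe j ⁻¹' {z})).toReal := by
    intro i j y
    rw [measure_partition μ (Xe j) (hXe j) _ (msS i y)]
    exact ENNReal.toReal_sum (fun z _ => fin _)
  -- total mass 1 per variable
  have htot1 : ∀ i, ∑ y : Option Bool, P i y = 1 := by
    intro i
    have h := measure_partition μ (Xe i) (hXe i) Set.univ MeasurableSet.univ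
    simp only [Set.univ_inter, measure_univ] at h
    have := congrArg ENNReal.toReal h
    rw [ENNReal.toReal_sum (fun z _ => fin _)] at this
    simpa using this.symm
  -- independence: joint factorization
  have hfact : ∀ i j, i ≠ j → ∀ y z,
      (μ (Xe i ⁻¹' {y} ∩ Xe j ⁻¹' {z})).toReal = P i y * P j z := by
    intro i j hij
    apply gibbs_eq (fun y z => (μ (Xe i ⁻¹' {y} ∩ Xe j ⁻¹' {z})).toReal) (P i) (P j)
    · intro y z; exact ENNReal.toReal_nonneg
    · intro y; exact hmarg i j y
    · intro z
      simp only [hP]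
      rw [measure_partition μ (Xe i) (hXe i) _ (msS j z)]
      rw [ENNReal.toReal_sum (fun y _ => fin _)]
      exact Finset.sum_congr rfl (fun y _ => by rw [Set.inter_comm])
    · rw [← htot1 i]
      exact Finset.sum_congr rfl (fun y _ => (hmarg i j y).symm)
    · have h := hindep i j hij
      unfold entropy at h
      rw [Fintype.sum_prod_type] at h
      have hpre : ∀ y z : Option Bool,
          (fun ω => (Xe i ω, Xe j ω)) ⁻¹' {(y, z)} = Xe i ⁻¹' {y} ∩ Xe j ⁻¹' {z} := by
        intro y z; ext ω
        simp [Prod.ext_iff]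
      simp only [hpre] at h
      exact h
  -- uniform: (μ T).toReal values
  have hTset : X ⁻¹' {true} = {ω | X ω = true} := by ext ω; simp
  have hμT : (μ (X ⁻¹' {true})).toReal = 1/2 := by
    rw [hTset, hunif]; simp [ENNReal.toReal_div]
  have hμF : (μ (X ⁻¹' {false})).toReal = 1/2 := by
    have h := measure_partition μ X hX Set.univ MeasurableSet.univ
    simp only [Set.univ_inter, measure_univ] at h
    have h2 := congrArg ENNReal.toReal h
    rw [ENNReal.toReal_sum (fun z _ => fin _)] at h2
    rw [Fintype.sum_bool] at h2
    simp only [ENNReal.toReal_one] at h2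
    rw [hμT] at h2  -- wrong order? h2 : 1 = toReal (X⁻¹'{true}) + toReal (X⁻¹'{false})
    linarith
  -- null facts
  have hN1 : ∀ i, μ (Xe i ⁻¹' {some true} ∩ X ⁻¹' {false}) = 0 := by
    intro i
    have : Xe i ⁻¹' {some true} ∩ X ⁻¹' {false} = {ω | Xe i ω = some true ∧ X ω = false} := by
      ext ω; simp [Set.mem_inter_iff]
    rw [this]; exact (herased i).1
  have hN2 : ∀ i, μ (Xe i ⁻¹' {some false} ∩ X ⁻¹' {true}) = 0 := by
    intro i
    have : Xe i ⁻¹' {some false} ∩ X ⁻¹' {true} = {ω | Xe i ω = some false ∧ X ω = true} := by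
      ext ω; simp [Set.mem_inter_iff]
    rw [this]; exact (herased i).2
  -- a i * b j = 0 for i ≠ j
  have hab : ∀ i j, i ≠ j → a i * b j = 0 := by
    intro i j hij
    have hsub : Xe i ⁻¹' {some true} ∩ Xe j ⁻¹' {some false} ⊆
        (Xe i ⁻¹' {some true} ∩ X ⁻¹' {false}) ∪ (Xe j ⁻¹' {some false} ∩ X ⁻¹' {true}) := by
      rintro ω ⟨h1, h2⟩
      rcases Bool.eq_false_or_eq_true (X ω) with hb | hb
      · refine Or.inr ⟨h2, ?_⟩; simp [hb]
      · refine Or.inl ⟨h1, ?_⟩; simp [hb]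
    have h0 : μ (Xe i ⁻¹' {some true} ∩ Xe j ⁻¹' {some false}) = 0 :=
      measure_mono_null hsub (measure_union_null (hN1 i) (hN2 j))
    have := hfact i j hij (some true) (some false)
    rw [h0] at this
    simpa using this.symm
  -- totals per i
  have hsum : ∀ i, p i + b i + a i = 1 := by
    intro i
    have h := htot1 i
    rw [Fintype.sum_option, Fintype.sum_bool] at h
    simp only [haf, hbf, hpf]
    linarith
  have hann : ∀ i, 0 ≤ a i := fun i => ENNReal.toReal_nonneg
  have hbnn : ∀ i, 0 ≤ b i := fun i => ENNReal.toReal_nonneg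
  have hpnn : ∀ i, 0 ≤ p i := fun i => ENNReal.toReal_nonneg
  -- goal rewrite
  have hgoal : ∀ i, {ω | Xe i ω = none} = Xe i ⁻¹' {none} := by
    intro i; ext ω; simp
  simp only [hgoal]
  show (3:ℝ) ≤ ∑ i, p i
  -- case analysis
  by_cases hA : ∀ i, b i = 0
  · -- all b zero: use key_bound with T = X⁻¹{true}, E i = Xe i ⁻¹ {some true}
    have hkey : ∑ i, a i ≤ 1 := by
      have := key_bound μ (X ⁻¹' {true}) (msT true) hμT (fun i => Xe i ⁻¹' {some true})
        (fun i => msS i (some true))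
        (fun i => by
          have : Xe i ⁻¹' {some true} \ X ⁻¹' {true} = Xe i ⁻¹' {some true} ∩ X ⁻¹' {false} := by
            ext ω
            simp [Set.mem_diff, Bool.not_eq_true]
          rw [this]; exact hN1 i)
        (fun i j hij => hfact i j hij (some true) (some true))
      exact this
    rw [Fin.sum_univ_four] at hkey
    rw [Fin.sum_univ_four]
    have e0 := hsum 0; have e1 := hsum 1; have e2 := hsum 2; have e3 := hsum 3
    rw [hA 0] at e0; rw [hA 1] at e1; rw [hA 2] at e2; rw [hA 3] at e3
    linarith
  · by_cases hB : ∀ i, a i = 0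
    · -- all a zero: symmetric
      have hkey : ∑ i, b i ≤ 1 := by
        have := key_bound μ (X ⁻¹' {false}) (msT false) hμF (fun i => Xe i ⁻¹' {some false})
          (fun i => msS i (some false))
          (fun i => by
            have : Xe i ⁻¹' {some false} \ X ⁻¹' {false} = Xe i ⁻¹' {some false} ∩ X ⁻¹' {true} := by
              ext ω
              simp [Set.mem_diff, Bool.not_eq_false]
            rw [this]; exact hN2 i)
          (fun i j hij => hfact i j hij (some false) (some false))
        exact this
      rw [Fin.sum_univ_four] at hkey
      rw [Fin.sum_univ_four]
      have e0 := hsum 0; have e1 := hsum 1; have e2 := hsum 2; have e3 := hsum 3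
      rw [hB 0] at e0; rw [hB 1] at e1; rw [hB 2] at e2; rw [hB 3] at e3
      linarith
    · -- mixed: single informative index
      push_neg at hA hB
      obtain ⟨i₁, hi₁⟩ := hA
      obtain ⟨i₂, hi₂⟩ := hB
      have hbi₁ : 0 < b i₁ := lt_of_le_of_ne (hbnn i₁) (Ne.symm hi₁)
      have hai₂ : 0 < a i₂ := lt_of_le_of_ne (hann i₂) (Ne.symm hi₂)
      have heq : i₁ = i₂ := by
        by_contra hne
        have := hab i₂ i₁ (fun h => hne h.symm)
        nlinarith
      subst heq
      have hzero : ∀ j, j ≠ i₁ → p j = 1 := by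
        intro j hj
        have h1 : a j = 0 := by
          have := hab j i₁ hj
          rcases mul_eq_zero.mp this with h | h
          · exact h
          · exact absurd h (ne_of_gt hbi₁)
        have h2 : b j = 0 := by
          have := hab i₁ j (fun h => hj h.symm)
          rcases mul_eq_zero.mp this with h | h
          · exact absurd h (ne_of_gt hai₂)
          · exact h
        have := hsum j
        rw [h1, h2] at this
        linarith
      have hcnt : ∑ j : Fin 4, (if j = i₁ then (0:ℝ) else 1) = 3 := by
        have hstep : ∀ j : Fin 4, (if j = i₁ then (0:ℝ) else 1) = 1 - (if j = i₁ then 1 else 0) := by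
          intro j; split <;> norm_num
        rw [Finset.sum_congr rfl (fun j _ => hstep j), Finset.sum_sub_distrib,
          Finset.sum_ite_eq' Finset.univ i₁ (fun _ => (1:ℝ))]
        simp
        norm_num
      rw [← hcnt]
      apply Finset.sum_le_sum
      intro j _
      by_cases h : j = i₁
      · simp only [h, if_pos rfl]
        exact hpnn i₁
      · simp only [if_neg h]
        exact le_of_eq (hzero j h).symm
end

section
/- Let X be uniform on {+,−}, and let X1, ..., Xn (n > 3) be erased versions of X with I(Xi; Xj) = 0 for all i ≠ j. Then Σ_{i=1}^n P(Xi = 0) ≥ n − 2. -/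
open MeasureTheory

lemma indep_of_mi_zero {Ω : Type*} [MeasurableSpace Ω] (μ : Measure Ω) [IsProbabilityMeasure μ]
    {α β : Type*} [Fintype α] [Fintype β] (X : Ω → α) (Y : Ω → β)
    (hXm : ∀ a : α, MeasurableSet (X ⁻¹' {a})) (hYm : ∀ b : β, MeasurableSet (Y ⁻¹' {b}))
    (h : entropy μ X + entropy μ Y - entropy μ (fun ω => (X ω, Y ω)) = 0)
    (a : α) (b : β) :
    (μ (X ⁻¹' {a} ∩ Y ⁻¹' {b})).toReal
      = (μ (X ⁻¹' {a})).toReal * (μ (Y ⁻¹' {b})).toReal := by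
  classical
  set pa : α → ℝ := fun a => (μ (X ⁻¹' {a})).toReal with hpa
  set pb : β → ℝ := fun b => (μ (Y ⁻¹' {b})).toReal with hpb
  set pab : α → β → ℝ := fun a b => (μ (X ⁻¹' {a} ∩ Y ⁻¹' {b})).toReal with hpab
  have hnn : ∀ a b, 0 ≤ pab a b := fun _ _ => ENNReal.toReal_nonneg
  have hnna : ∀ a, 0 ≤ pa a := fun _ => ENNReal.toReal_nonneg
  have hnnb : ∀ b, 0 ≤ pb b := fun _ => ENNReal.toReal_nonneg
  have hlea : ∀ a b, pab a b ≤ pa a := fun a b =>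
    ENNReal.toReal_mono (measure_ne_top μ _) (measure_mono Set.inter_subset_left)
  have hleb : ∀ a b, pab a b ≤ pb b := fun a b =>
    ENNReal.toReal_mono (measure_ne_top μ _) (measure_mono Set.inter_subset_right)
  -- marginals
  have marg1 : ∀ a, ∑ b, pab a b = pa a := by
    intro a
    have he : X ⁻¹' {a} = ⋃ b ∈ (Finset.univ : Finset β), X ⁻¹' {a} ∩ Y ⁻¹' {b} := by
      ext ω; simp
    have hd : (↑(Finset.univ : Finset β) : Set β).PairwiseDisjoint
        (fun b => X ⁻¹' {a} ∩ Y ⁻¹' {b}) := by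
      intro b1 _ b2 _ hne
      refine Set.disjoint_left.2 fun ω h1 h2 => hne ?_
      have e1 : Y ω = b1 := h1.2
      have e2 : Y ω = b2 := h2.2
      rw [← e1, ← e2]
    have := measure_biUnion_finset (μ := μ) hd
      (fun b _ => (hXm a).inter (hYm b))
    rw [← he] at this
    have := congrArg ENNReal.toReal this
    rw [ENNReal.toReal_sum (fun b _ => measure_ne_top μ _)] at this
    exact this.symm
  have marg2 : ∀ b, ∑ a, pab a b = pb b := by
    intro b
    have he : Y ⁻¹' {b} = ⋃ a ∈ (Finset.univ : Finset α), X ⁻¹' {a} ∩ Y ⁻¹' {b} := by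
      ext ω; simp
    have hd : (↑(Finset.univ : Finset α) : Set α).PairwiseDisjoint
        (fun a => X ⁻¹' {a} ∩ Y ⁻¹' {b}) := by
      intro a1 _ a2 _ hne
      refine Set.disjoint_left.2 fun ω h1 h2 => hne ?_
      have e1 : X ω = a1 := h1.1
      have e2 : X ω = a2 := h2.1
      rw [← e1, ← e2]
    have := measure_biUnion_finset (μ := μ) hd
      (fun a _ => (hXm a).inter (hYm b))
    rw [← he] at this
    have := congrArg ENNReal.toReal this
    rw [ENNReal.toReal_sum (fun a _ => measure_ne_top μ _)] at this
    exact this.symm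
  have tot1 : ∑ a, pa a = 1 := by
    have := sum_measure_preimage_singleton (μ := μ) (Finset.univ : Finset α)
      (f := X) (fun a _ => hXm a)
    simp only [Finset.coe_univ, Set.preimage_univ, measure_univ] at this
    have := congrArg ENNReal.toReal this
    rw [ENNReal.toReal_sum (fun a _ => measure_ne_top μ _)] at this
    simpa using this
  have tot2 : ∑ b, pb b = 1 := by
    have := sum_measure_preimage_singleton (μ := μ) (Finset.univ : Finset β)
      (f := Y) (fun b _ => hYm b)
    simp only [Finset.coe_univ, Set.preimage_univ, measure_univ] at this
    have := congrArg ENNReal.toReal this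
    rw [ENNReal.toReal_sum (fun b _ => measure_ne_top μ _)] at this
    simpa using this
  -- entropy equation in natural logs
  have hpre : ∀ p : α × β, (fun ω => (X ω, Y ω)) ⁻¹' {p} = X ⁻¹' {p.1} ∩ Y ⁻¹' {p.2} := by
    intro p; ext ω; simp [Prod.ext_iff]
  have hl2 : Real.log 2 ≠ 0 := ne_of_gt (Real.log_pos one_lt_two)
  have hconv : ∀ x y : ℝ, x * Real.logb 2 y * Real.log 2 = x * Real.log y := by
    intro x y; rw [Real.logb]; field_simp
  have hE : (∑ a, pa a * Real.logb 2 (pa a)) + (∑ b, pb b * Real.logb 2 (pb b))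
      = ∑ a, ∑ b, pab a b * Real.logb 2 (pab a b) := by
    unfold entropy at h
    simp only [hpre] at h
    rw [Fintype.sum_prod_type] at h
    linarith
  have hnat : (∑ a, pa a * Real.log (pa a)) + (∑ b, pb b * Real.log (pb b))
      = ∑ a, ∑ b, pab a b * Real.log (pab a b) := by
    have := congrArg (· * Real.log 2) hE
    simp only [add_mul, Finset.sum_mul, hconv] at this
    exact this
  -- the two comparison functions
  set f : α → β → ℝ := fun a b => pab a b * (Real.log (pa a * pb b) - Real.log (pab a b))
    with hf
  set g : α → β → ℝ := fun a b => pa a * pb b - pab a b with hg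
  have hpos : ∀ a b, pab a b ≠ 0 → 0 < pab a b ∧ 0 < pa a ∧ 0 < pb b := by
    intro a b hz
    have h1 : 0 < pab a b := lt_of_le_of_ne (hnn a b) (Ne.symm hz)
    exact ⟨h1, lt_of_lt_of_le h1 (hlea a b), lt_of_lt_of_le h1 (hleb a b)⟩
  have hsumf : ∑ a, ∑ b, f a b = 0 := by
    have hsplit : ∀ a b, f a b
        = pab a b * Real.log (pa a) + pab a b * Real.log (pb b)
          - pab a b * Real.log (pab a b) := by
      intro a b
      by_cases hz : pab a b = 0
      · simp [hf, hz]
      · obtain ⟨h1, h2, h3⟩ := hpos a b hz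
        have hfe : f a b = pab a b * (Real.log (pa a * pb b) - Real.log (pab a b)) := rfl
        rw [hfe, Real.log_mul (ne_of_gt h2) (ne_of_gt h3)]
        ring
    simp only [hsplit]
    simp only [Finset.sum_sub_distrib, Finset.sum_add_distrib]
    have e1 : ∑ a, ∑ b, pab a b * Real.log (pa a) = ∑ a, pa a * Real.log (pa a) := by
      apply Finset.sum_congr rfl; intro a _
      rw [← Finset.sum_mul, marg1]
    have e2 : ∑ a, ∑ b, pab a b * Real.log (pb b) = ∑ b, pb b * Real.log (pb b) := by
      rw [Finset.sum_comm]
      apply Finset.sum_congr rfl; intro b _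
      rw [← Finset.sum_mul, marg2]
    rw [e1, e2, hnat]
    ring
  have hsumg : ∑ a, ∑ b, g a b = 0 := by
    simp only [hg]
    simp only [Finset.sum_sub_distrib]
    have e1 : ∑ a, ∑ b, pa a * pb b = 1 := by
      rw [← Fintype.sum_mul_sum, tot1, tot2]; norm_num
    have e2 : ∑ a, ∑ b, pab a b = 1 := by
      rw [show (∑ a, ∑ b, pab a b) = ∑ a, pa a from
        Finset.sum_congr rfl fun a _ => marg1 a, tot1]
    rw [e1, e2]; ring
  have hle : ∀ a b, f a b ≤ g a b := by
    intro a b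
    by_cases hz : pab a b = 0
    · simp only [hf, hg, hz]
      simpa using mul_nonneg (hnna a) (hnnb b)
    · obtain ⟨h1, h2, h3⟩ := hpos a b hz
      have hq : 0 < pa a * pb b := mul_pos h2 h3
      have hr : 0 < pa a * pb b / pab a b := div_pos hq h1
      have hlog := Real.log_le_sub_one_of_pos hr
      have hdiv : Real.log (pa a * pb b / pab a b)
          = Real.log (pa a * pb b) - Real.log (pab a b) :=
        Real.log_div (ne_of_gt hq) (ne_of_gt h1)
      have := mul_le_mul_of_nonneg_left hlog (le_of_lt h1)
      rw [hdiv] at this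
      calc f a b = pab a b * (Real.log (pa a * pb b) - Real.log (pab a b)) := rfl
        _ ≤ pab a b * (pa a * pb b / pab a b - 1) := this
        _ = pa a * pb b - pab a b := by field_simp
  -- equality everywhere
  have hfg : ∀ a b, f a b = g a b := by
    have hsum : ∑ p : α × β, f p.1 p.2 = ∑ p : α × β, g p.1 p.2 := by
      rw [Fintype.sum_prod_type, Fintype.sum_prod_type, hsumf, hsumg]
    have := (Finset.sum_eq_sum_iff_of_le
      (fun (p : α × β) _ => hle p.1 p.2)).1 hsum
    intro a b
    exact (this (a, b) (Finset.mem_univ _))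
  have heq : pab a b * (Real.log (pa a * pb b) - Real.log (pab a b))
      = pa a * pb b - pab a b := hfg a b
  have hgoal : pab a b = pa a * pb b := ?_
  · exact hgoal
  by_cases hz : pab a b = 0
  · rw [hz] at heq ⊢
    simp only [zero_mul, sub_zero] at heq
    linarith
  · obtain ⟨h1, h2, h3⟩ := hpos a b hz
    have hq : 0 < pa a * pb b := mul_pos h2 h3
    by_contra hne
    have hne' : pa a * pb b / pab a b ≠ 1 := by
      intro hc
      exact hne ((div_eq_one_iff_eq (ne_of_gt h1)).1 hc).symm
    have hlt := Real.log_lt_sub_one_of_pos (div_pos hq h1) hne'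
    have hdiv : Real.log (pa a * pb b / pab a b)
        = Real.log (pa a * pb b) - Real.log (pab a b) :=
      Real.log_div (ne_of_gt hq) (ne_of_gt h1)
    rw [hdiv] at hlt
    have := mul_lt_mul_of_pos_left hlt h1
    have hfin : pab a b * (pa a * pb b / pab a b - 1) = pa a * pb b - pab a b := by
      field_simp
    rw [hfin] at this
    linarith

lemma sum_le_one_aux {Ω : Type*} [MeasurableSpace Ω] (μ : Measure Ω) [IsProbabilityMeasure μ]
    {n : ℕ} (A : Fin n → Set Ω) (hA : ∀ i, MeasurableSet (A i))
    (E : Set Ω) (hE : MeasurableSet E) (hEμ : μ E = 1/2)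
    (hsub : ∀ i, μ (A i \ E) = 0)
    (hind : ∀ i j, i ≠ j → (μ (A i ∩ A j)).toReal = (μ (A i)).toReal * (μ (A j)).toReal) :
    ∑ i, (μ (A i)).toReal ≤ 1 := by
  classical
  set a : Fin n → ℝ := fun i => (μ (A i)).toReal with ha
  set s : ℝ := ∑ i, a i with hs
  have hann : ∀ i, 0 ≤ a i := fun _ => ENNReal.toReal_nonneg
  have hsnn : 0 ≤ s := Finset.sum_nonneg fun i _ => hann i
  -- integrability facts
  have hint : ∀ S : Set Ω, MeasurableSet S → Integrable (S.indicator (1 : Ω → ℝ)) μ :=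
    fun S hS => (integrable_const (1 : ℝ)).indicator hS
  have hval : ∀ (S : Set Ω), MeasurableSet S →
      ∫ ω, S.indicator (1 : Ω → ℝ) ω ∂μ = (μ S).toReal := by
    intro S hS
    have h := MeasureTheory.integral_indicator_const (μ := μ) (1 : ℝ) hS
    simp only [smul_eq_mul, mul_one] at h
    exact h
  -- pointwise expansion
  have hxx : ∀ (S T : Set Ω) (ω : Ω), (S ∩ T).indicator (1 : Ω → ℝ) ω
      = S.indicator (1 : Ω → ℝ) ω * T.indicator (1 : Ω → ℝ) ω := by
    intro S T ω
    rw [Set.inter_indicator_one]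
    rfl
  have hpt : ∀ ω : Ω, ((∑ i, (A i).indicator (1 : Ω → ℝ) ω) - (2*s) * E.indicator (1:Ω→ℝ) ω)^2
      = (∑ i, ∑ j, ((A i ∩ A j).indicator (1:Ω→ℝ) ω))
        - (4*s) * (∑ i, ((A i ∩ E).indicator (1:Ω→ℝ) ω))
        + (4*s^2) * E.indicator (1:Ω→ℝ) ω := by
    intro ω
    simp only [hxx]
    rw [← Finset.sum_mul_sum, ← Finset.sum_mul]
    have he : E.indicator (1:Ω→ℝ) ω * E.indicator (1:Ω→ℝ) ω = E.indicator (1:Ω→ℝ) ω := by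
      by_cases h : ω ∈ E <;> simp [h]
    set u := ∑ i, (A i).indicator (1:Ω→ℝ) ω
    set e := E.indicator (1:Ω→ℝ) ω
    linear_combination (4*s^2) * he
  -- nonnegativity of the square integral
  have h0 : (0:ℝ) ≤ ∫ ω, ((∑ i, (A i).indicator (1 : Ω → ℝ) ω)
      - (2*s) * E.indicator (1:Ω→ℝ) ω)^2 ∂μ :=
    integral_nonneg fun ω => sq_nonneg _
  have hfe : (fun ω => ((∑ i, (A i).indicator (1 : Ω → ℝ) ω)
      - (2*s) * E.indicator (1:Ω→ℝ) ω)^2)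
      = fun ω => (∑ i, ∑ j, ((A i ∩ A j).indicator (1:Ω→ℝ) ω))
        - (4*s) * (∑ i, ((A i ∩ E).indicator (1:Ω→ℝ) ω))
        + (4*s^2) * E.indicator (1:Ω→ℝ) ω := funext hpt
  rw [hfe] at h0
  -- compute the integral
  have hint1 : Integrable (fun ω => ∑ i, ∑ j, ((A i ∩ A j).indicator (1:Ω→ℝ) ω)) μ :=
    integrable_finset_sum _ fun i _ => integrable_finset_sum _ fun j _ =>
      hint _ ((hA i).inter (hA j))
  have hint2 : Integrable (fun ω => (4*s) * (∑ i, ((A i ∩ E).indicator (1:Ω→ℝ) ω))) μ :=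
    (integrable_finset_sum _ fun i _ => hint _ ((hA i).inter hE)).const_mul _
  have hint3 : Integrable (fun ω => (4*s^2) * E.indicator (1:Ω→ℝ) ω) μ :=
    (hint _ hE).const_mul _
  have hsplit : (∫ ω, ((∑ i, ∑ j, ((A i ∩ A j).indicator (1:Ω→ℝ) ω))
        - (4*s) * (∑ i, ((A i ∩ E).indicator (1:Ω→ℝ) ω))
        + (4*s^2) * E.indicator (1:Ω→ℝ) ω) ∂μ)
      = (∫ ω, (∑ i, ∑ j, ((A i ∩ A j).indicator (1:Ω→ℝ) ω)) ∂μ)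
        - (∫ ω, (4*s) * (∑ i, ((A i ∩ E).indicator (1:Ω→ℝ) ω)) ∂μ)
        + ∫ ω, (4*s^2) * E.indicator (1:Ω→ℝ) ω ∂μ := by
    rw [← integral_sub hint1 hint2]
    exact integral_add (hint1.sub hint2) hint3
  rw [hsplit] at h0
  have e1 : ∫ ω, (∑ i, ∑ j, ((A i ∩ A j).indicator (1:Ω→ℝ) ω)) ∂μ
      = ∑ i, ∑ j, (μ (A i ∩ A j)).toReal := by
    rw [integral_finset_sum _ fun i _ => integrable_finset_sum _ fun j _ =>
      hint _ ((hA i).inter (hA j))]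
    apply Finset.sum_congr rfl; intro i _
    rw [integral_finset_sum _ fun j _ => hint _ ((hA i).inter (hA j))]
    exact Finset.sum_congr rfl fun j _ => hval _ ((hA i).inter (hA j))
  have e2 : ∫ ω, (4*s) * (∑ i, ((A i ∩ E).indicator (1:Ω→ℝ) ω)) ∂μ
      = (4*s) * ∑ i, (μ (A i ∩ E)).toReal := by
    rw [integral_const_mul, integral_finset_sum _ fun i _ => hint _ ((hA i).inter hE)]
    congr 1
    exact Finset.sum_congr rfl fun i _ => hval _ ((hA i).inter hE)
  have e3 : ∫ ω, (4*s^2) * E.indicator (1:Ω→ℝ) ω ∂μ = (4*s^2) * (μ E).toReal := by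
    rw [integral_const_mul, hval _ hE]
  rw [e1, e2, e3] at h0
  -- evaluate the pieces
  have hEr : (μ E).toReal = 1/2 := by rw [hEμ]; simp [ENNReal.toReal_div]
  have hAiE : ∀ i, (μ (A i ∩ E)).toReal = a i := by
    intro i
    have := measure_inter_add_diff (μ := μ) (A i) hE
    rw [hsub i, add_zero] at this
    exact congrArg ENNReal.toReal this
  have hAA : ∑ i, ∑ j, (μ (A i ∩ A j)).toReal = s + (s*s - ∑ i, a i * a i) := by
    have hrow : ∀ i : Fin n, ∑ j, (μ (A i ∩ A j)).toReal
        = a i + (a i * s - a i * a i) := by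
      intro i
      rw [← Finset.add_sum_erase _ _ (Finset.mem_univ i)]
      congr 1
      · rw [Set.inter_self]
      · have : ∑ j ∈ Finset.univ.erase i, (μ (A i ∩ A j)).toReal
            = ∑ j ∈ Finset.univ.erase i, a i * a j := by
          apply Finset.sum_congr rfl
          intro j hj
          exact hind i j (Ne.symm (Finset.ne_of_mem_erase hj))
        rw [this, ← Finset.mul_sum, Finset.sum_erase_eq_sub (Finset.mem_univ i), ← hs]
        ring
    rw [Finset.sum_congr rfl fun i _ => hrow i]
    rw [Finset.sum_add_distrib, Finset.sum_sub_distrib, ← Finset.sum_mul, ← hs]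
  have hsum2 : ∑ i, (μ (A i ∩ E)).toReal = s := Finset.sum_congr rfl fun i _ => hAiE i
  rw [hAA, hsum2, hEr] at h0
  have hsq : ∑ i, a i * a i ≥ 0 := Finset.sum_nonneg fun i _ => mul_nonneg (hann i) (hann i)
  nlinarith [h0, hsq, hsnn]

/-- Lemma `cases_n_k=2`: `X` uniform on `{+,−}` (`Bool`, `true = +`), `X₁,…,Xₙ` (`n > 3`)
erased versions of `X` with pairwise mutual information `I(Xᵢ;Xⱼ) = 0` for `i ≠ j`.
Then `∑ᵢ P(Xᵢ = 0) ≥ n − 2`. -/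
theorem stmt_11 {Ω : Type*} [MeasurableSpace Ω] (μ : Measure Ω) [IsProbabilityMeasure μ]
    (n : ℕ) (hn : 3 < n)
    (X : Ω → Bool) (hX : Measurable X) (hunif : μ {ω | X ω = true} = 1/2)
    (Xe : Fin n → Ω → Option Bool) (hXe : ∀ i, Measurable (Xe i))
    (herased : ∀ i, μ {ω | Xe i ω = some true ∧ X ω = false} = 0 ∧
      μ {ω | Xe i ω = some false ∧ X ω = true} = 0)
    (hindep : ∀ i j, i ≠ j →
      entropy μ (Xe i) + entropy μ (Xe j) - entropy μ (fun ω => (Xe i ω, Xe j ω)) = 0) :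
    (n : ℝ) - 2 ≤ ∑ i, (μ {ω | Xe i ω = none}).toReal := by
  classical
  have hm : ∀ i (v : Option Bool), MeasurableSet (Xe i ⁻¹' {v}) :=
    fun i v => hXe i (measurableSet_singleton v)
  set A : Fin n → Set Ω := fun i => Xe i ⁻¹' {some true} with hA
  set B : Fin n → Set Ω := fun i => Xe i ⁻¹' {some false} with hB
  set Z : Fin n → Set Ω := fun i => Xe i ⁻¹' {none} with hZ
  set E : Set Ω := X ⁻¹' {true} with hEdef
  have hEmeas : MeasurableSet E := hX (measurableSet_singleton true)
  have hEμ : μ E = 1/2 := hunif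
  set E' : Set Ω := X ⁻¹' {false} with hE'def
  have hE'meas : MeasurableSet E' := hX (measurableSet_singleton false)
  have hcompl : E' = Eᶜ := by
    ext ω
    simp [hEdef, hE'def]
  have hE'μ : μ E' = 1/2 := by
    rw [hcompl, measure_compl hEmeas (measure_ne_top μ _), measure_univ, hEμ]
    simpa using ENNReal.sub_half (a := 1) ENNReal.one_ne_top
  have hsubA : ∀ i, μ (A i \ E) = 0 := by
    intro i
    have hset : A i \ E = {ω | Xe i ω = some true ∧ X ω = false} := by
      ext ω
      simp [hA, hEdef, Bool.not_eq_true]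
    rw [hset]
    exact (herased i).1
  have hsubB : ∀ i, μ (B i \ E') = 0 := by
    intro i
    have hset : B i \ E' = {ω | Xe i ω = some false ∧ X ω = true} := by
      ext ω
      simp [hB, hE'def, Bool.not_eq_false]
    rw [hset]
    exact (herased i).2
  have hindp : ∀ (i j : Fin n), i ≠ j → ∀ v w : Option Bool,
      (μ (Xe i ⁻¹' {v} ∩ Xe j ⁻¹' {w})).toReal
        = (μ (Xe i ⁻¹' {v})).toReal * (μ (Xe j ⁻¹' {w})).toReal :=
    fun i j hij v w =>
      indep_of_mi_zero μ (Xe i) (Xe j) (hm i) (hm j) (hindep i j hij) v w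
  have hsA : ∑ i, (μ (A i)).toReal ≤ 1 :=
    sum_le_one_aux μ A (fun i => hm i _) E hEmeas hEμ hsubA
      (fun i j hij => hindp i j hij (some true) (some true))
  have hsB : ∑ i, (μ (B i)).toReal ≤ 1 :=
    sum_le_one_aux μ B (fun i => hm i _) E' hE'meas hE'μ hsubB
      (fun i j hij => hindp i j hij (some false) (some false))
  have hpart : ∀ i, (μ (Z i)).toReal + ((μ (A i)).toReal + (μ (B i)).toReal) = 1 := by
    intro i
    have h1 := sum_measure_preimage_singleton (μ := μ)
      (Finset.univ : Finset (Option Bool)) (f := Xe i) (fun v _ => hm i v)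
    simp only [Finset.coe_univ, Set.preimage_univ, measure_univ] at h1
    have h2 := congrArg ENNReal.toReal h1
    rw [ENNReal.toReal_sum (fun v _ => measure_ne_top μ _)] at h2
    rw [Fintype.sum_option, Fintype.sum_bool] at h2
    simpa using h2
  have hgoal : (∑ i, (μ {ω | Xe i ω = none}).toReal) = ∑ i, (μ (Z i)).toReal := rfl
  rw [hgoal]
  have hZsum : ∑ i, (μ (Z i)).toReal
      = (n : ℝ) - (∑ i, (μ (A i)).toReal) - (∑ i, (μ (B i)).toReal) := by
    have hz : ∀ i : Fin n, (μ (Z i)).toReal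
        = 1 - (μ (A i)).toReal - (μ (B i)).toReal := fun i => by linarith [hpart i]
    rw [Finset.sum_congr rfl fun i _ => hz i, Finset.sum_sub_distrib,
      Finset.sum_sub_distrib, Finset.sum_const, Finset.card_univ, Fintype.card_fin]
    simp [nsmul_eq_mul]
  rw [hZsum]
  linarith
end

section
/- Let x ∈ {+,−}^l be a source string and for each i ∈ {1,...,n} let X_i^l(x) ∈ {+,−,0}^l be erased versions of x (as random functions of a uniform source X^l on {+,−}^l, with independent coordinates over t for the source). Suppose for every coordinate t and all i ≠ j, the random variables X_{it}(X) and X_{jt}(X) are independent. Then max over x ∈ {+,−}^l of Σ_{i=1}^n (1/l) Σ_{t=1}^l d(x_t, X_{it}(x)) ≥ n − 1, where d(x,x̂) = 0 if x̂ = x, 1 if x̂ = 0, and ∞ otherwise. -/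
open MeasureTheory ENNReal

/-- The erasure distortion measure: `0` for a correct symbol, `1` for an erasure
(`none`), and `∞` for an error. -/
noncomputable def erasureDist (x : Bool) (y : Option Bool) : ℝ≥0∞ :=
  match y with
  | none => 1
  | some b => if b = x then 0 else ⊤

lemma kl_support {Ω : Type*} [MeasurableSpace Ω] (hms : ∀ s : Set Ω, MeasurableSet s)
    {α β : Type*} [Fintype α] [Fintype β]
    (μ : Measure Ω) [IsProbabilityMeasure μ]
    (A : Ω → α) (B : Ω → β)
    (h : entropy μ A + entropy μ B - entropy μ (fun ω => (A ω, B ω)) = 0)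
    (a : α) (b : β) (ha : μ (A ⁻¹' {a}) ≠ 0) (hb : μ (B ⁻¹' {b}) ≠ 0) :
    μ ((fun ω => (A ω, B ω)) ⁻¹' {(a, b)}) ≠ 0 := by
  classical
  intro hP0
  set J : Ω → α × β := fun ω => (A ω, B ω) with hJ
  set P : α × β → ℝ := fun p => (μ (J ⁻¹' {p})).toReal with hPdef
  set pA : α → ℝ := fun a => (μ (A ⁻¹' {a})).toReal with hpAdef
  set pB : β → ℝ := fun b => (μ (B ⁻¹' {b})).toReal with hpBdef
  have hPn : ∀ p, 0 ≤ P p := fun p => ENNReal.toReal_nonneg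
  -- marginals
  have hmargA : ∀ a : α, pA a = ∑ b : β, P (a, b) := by
    intro a
    have hset : A ⁻¹' {a} = ⋃ b ∈ (Finset.univ : Finset β), J ⁻¹' {(a, b)} := by
      ext ω
      simp only [Set.mem_preimage, Set.mem_singleton_iff, Set.mem_iUnion, Finset.mem_univ,
        Set.mem_preimage, Set.mem_singleton_iff, exists_prop, true_and, hJ, Prod.mk.injEq]
      exact ⟨fun h => ⟨B ω, h, rfl⟩, fun ⟨b, h, _⟩ => h⟩
    have hdisj : ∀ b ∈ (Finset.univ : Finset β), ∀ b' ∈ (Finset.univ : Finset β), b ≠ b' →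
        Disjoint (J ⁻¹' {(a, b)}) (J ⁻¹' {(a, b')}) := by
      intro b _ b' _ hbb'
      apply Set.disjoint_left.2
      intro ω h1 h2
      simp only [Set.mem_preimage, Set.mem_singleton_iff] at h1 h2
      exact hbb' (congrArg Prod.snd (h1.symm.trans h2))
    have hme := measure_biUnion_finset (μ := μ) hdisj (fun b _ => hms _)
    have h2 : μ (A ⁻¹' {a}) = ∑ p : β, μ (J ⁻¹' {(a, p)}) := by rw [hset]; exact hme
    show (μ (A ⁻¹' {a})).toReal = ∑ b : β, (μ (J ⁻¹' {(a, b)})).toReal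
    rw [h2, ENNReal.toReal_sum (fun b _ => measure_ne_top μ _)]
  have hmargB : ∀ b : β, pB b = ∑ a : α, P (a, b) := by
    intro b
    have hset : B ⁻¹' {b} = ⋃ a ∈ (Finset.univ : Finset α), J ⁻¹' {(a, b)} := by
      ext ω
      simp only [Set.mem_preimage, Set.mem_singleton_iff, Set.mem_iUnion, Finset.mem_univ,
        exists_prop, true_and, hJ, Prod.mk.injEq]
      exact ⟨fun h => ⟨A ω, rfl, h⟩, fun ⟨a, _, h⟩ => h⟩
    have hdisj : ∀ x ∈ (Finset.univ : Finset α), ∀ x' ∈ (Finset.univ : Finset α), x ≠ x' →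
        Disjoint (J ⁻¹' {(x, b)}) (J ⁻¹' {(x', b)}) := by
      intro x _ x' _ hxx'
      apply Set.disjoint_left.2
      intro ω h1 h2
      simp only [Set.mem_preimage, Set.mem_singleton_iff] at h1 h2
      exact hxx' (congrArg Prod.fst (h1.symm.trans h2))
    have hme := measure_biUnion_finset (μ := μ) hdisj (fun a _ => hms _)
    have h2 : μ (B ⁻¹' {b}) = ∑ p : α, μ (J ⁻¹' {(p, b)}) := by rw [hset]; exact hme
    show (μ (B ⁻¹' {b})).toReal = ∑ a : α, (μ (J ⁻¹' {(a, b)})).toReal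
    rw [h2, ENNReal.toReal_sum (fun a _ => measure_ne_top μ _)]
  -- total masses
  have hsumA : ∑ x : α, pA x = 1 := by
    have hset : (Set.univ : Set Ω) = ⋃ x ∈ (Finset.univ : Finset α), A ⁻¹' {x} := by
      ext ω; simp
    have hdisj : ∀ x ∈ (Finset.univ : Finset α), ∀ x' ∈ (Finset.univ : Finset α), x ≠ x' →
        Disjoint (A ⁻¹' {x}) (A ⁻¹' {x'}) := by
      intro x _ x' _ hxx'
      apply Set.disjoint_left.2
      intro ω h1 h2
      simp only [Set.mem_preimage, Set.mem_singleton_iff] at h1 h2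
      exact hxx' (h1 ▸ h2 ▸ rfl)
    have hμ := measure_biUnion_finset (μ := μ) hdisj (fun x _ => hms _)
    rw [← hset, measure_univ] at hμ
    have := congrArg ENNReal.toReal hμ
    rw [ENNReal.toReal_one, ENNReal.toReal_sum (fun x _ => measure_ne_top μ _)] at this
    exact this.symm
  have hsumB : ∑ x : β, pB x = 1 := by
    have hset : (Set.univ : Set Ω) = ⋃ x ∈ (Finset.univ : Finset β), B ⁻¹' {x} := by
      ext ω; simp
    have hdisj : ∀ x ∈ (Finset.univ : Finset β), ∀ x' ∈ (Finset.univ : Finset β), x ≠ x' →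
        Disjoint (B ⁻¹' {x}) (B ⁻¹' {x'}) := by
      intro x _ x' _ hxx'
      apply Set.disjoint_left.2
      intro ω h1 h2
      simp only [Set.mem_preimage, Set.mem_singleton_iff] at h1 h2
      exact hxx' (h1 ▸ h2 ▸ rfl)
    have hμ := measure_biUnion_finset (μ := μ) hdisj (fun x _ => hms _)
    rw [← hset, measure_univ] at hμ
    have := congrArg ENNReal.toReal hμ
    rw [ENNReal.toReal_one, ENNReal.toReal_sum (fun x _ => measure_ne_top μ _)] at this
    exact this.symm
  have hsumP : ∑ p : α × β, P p = 1 := by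
    rw [Fintype.sum_prod_type]
    calc ∑ x : α, ∑ y : β, P (x, y) = ∑ x : α, pA x := by
          refine Finset.sum_congr rfl fun x _ => (hmargA x).symm
      _ = 1 := hsumA
  -- pointwise bounds
  have hleA : ∀ p : α × β, P p ≤ pA p.1 := by
    intro p
    apply ENNReal.toReal_mono (measure_ne_top μ _)
    apply measure_mono
    intro ω hω
    simp only [Set.mem_preimage, Set.mem_singleton_iff] at hω ⊢
    rw [hJ] at hω
    exact congrArg Prod.fst hω
  have hleB : ∀ p : α × β, P p ≤ pB p.2 := by
    intro p
    apply ENNReal.toReal_mono (measure_ne_top μ _)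
    apply measure_mono
    intro ω hω
    simp only [Set.mem_preimage, Set.mem_singleton_iff] at hω ⊢
    rw [hJ] at hω
    exact congrArg Prod.snd hω
  -- rewrite entropies
  have eA : entropy μ A = -∑ p : α × β, P p * Real.logb 2 (pA p.1) := by
    have key : ∀ x : α, (μ (A ⁻¹' {x})).toReal * Real.logb 2 ((μ (A ⁻¹' {x})).toReal)
        = ∑ y : β, P (x, y) * Real.logb 2 (pA (x, y).1) := by
      intro x
      have step : ∑ y : β, P (x, y) * Real.logb 2 (pA (x, y).1)
          = (∑ y : β, P (x, y)) * Real.logb 2 (pA x) := by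
        rw [Finset.sum_mul]
      rw [step, ← hmargA x]
    unfold entropy
    rw [Fintype.sum_prod_type]
    congr 1
    exact Finset.sum_congr rfl fun x _ => key x
  have eB : entropy μ B = -∑ p : α × β, P p * Real.logb 2 (pB p.2) := by
    have key : ∀ y : β, (μ (B ⁻¹' {y})).toReal * Real.logb 2 ((μ (B ⁻¹' {y})).toReal)
        = ∑ x : α, P (x, y) * Real.logb 2 (pB (x, y).2) := by
      intro y
      have step : ∑ x : α, P (x, y) * Real.logb 2 (pB (x, y).2)
          = (∑ x : α, P (x, y)) * Real.logb 2 (pB y) := by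
        rw [Finset.sum_mul]
      rw [step, ← hmargB y]
    unfold entropy
    rw [Fintype.sum_prod_type_right]
    congr 1
    exact Finset.sum_congr rfl fun y _ => key y
  have eJ : entropy μ (fun ω => (A ω, B ω)) = -∑ p : α × β, P p * Real.logb 2 (P p) := rfl
  rw [eA, eB, eJ] at h
  -- convert to natural log sum
  have hlog2 : (0:ℝ) < Real.log 2 := Real.log_pos one_lt_two
  have hG : ∑ p : α × β, P p * (Real.log (P p) - Real.log (pA p.1) - Real.log (pB p.2)) = 0 := by
    have h' : ∑ p : α × β, P p * (Real.logb 2 (P p) - Real.logb 2 (pA p.1)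
        - Real.logb 2 (pB p.2)) = 0 := by
      simp only [mul_sub, Finset.sum_sub_distrib]
      linarith [h]
    have h'' : ∑ p : α × β, P p * (Real.log (P p) - Real.log (pA p.1) - Real.log (pB p.2))
        = (∑ p : α × β, P p * (Real.logb 2 (P p) - Real.logb 2 (pA p.1)
            - Real.logb 2 (pB p.2))) * Real.log 2 := by
      rw [Finset.sum_mul]
      refine Finset.sum_congr rfl fun p _ => ?_
      simp only [Real.logb]
      field_simp
    rw [h'', h']
    ring
  -- pointwise lower bound
  have hlow : ∀ p : α × β, P p - pA p.1 * pB p.2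
      ≤ P p * (Real.log (P p) - Real.log (pA p.1) - Real.log (pB p.2)) := by
    intro p
    rcases eq_or_lt_of_le (hPn p) with hp | hp
    · rw [← hp]
      have : 0 ≤ pA p.1 * pB p.2 :=
        mul_nonneg ENNReal.toReal_nonneg ENNReal.toReal_nonneg
      simp
      linarith
    · have hpA : 0 < pA p.1 := lt_of_lt_of_le hp (hleA p)
      have hpB : 0 < pB p.2 := lt_of_lt_of_le hp (hleB p)
      have hx : Real.log (pA p.1 * pB p.2 / P p) ≤ pA p.1 * pB p.2 / P p - 1 :=
        Real.log_le_sub_one_of_pos (by positivity)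
      rw [Real.log_div (by positivity) (ne_of_gt hp),
        Real.log_mul (ne_of_gt hpA) (ne_of_gt hpB)] at hx
      have h2 : P p * (pA p.1 * pB p.2 / P p - 1) = pA p.1 * pB p.2 - P p := by
        field_simp
      nlinarith [mul_le_mul_of_nonneg_left hx (le_of_lt hp)]
  -- strictness at (a,b)
  have hPab : P (a, b) = 0 := by rw [hPdef]; simp only; rw [hJ] at hP0 ⊢; rw [hP0]; simp
  have hpApos : 0 < pA a := ENNReal.toReal_pos ha (measure_ne_top μ _)
  have hpBpos : 0 < pB b := ENNReal.toReal_pos hb (measure_ne_top μ _)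
  have hstrict : P (a, b) - pA (a, b).1 * pB (a, b).2
      < P (a, b) * (Real.log (P (a, b)) - Real.log (pA (a, b).1) - Real.log (pB (a, b).2)) := by
    rw [hPab]
    simp only [zero_sub, zero_mul]
    exact neg_lt_zero.2 (mul_pos hpApos hpBpos)
  have hlt : ∑ p : α × β, (P p - pA p.1 * pB p.2)
      < ∑ p : α × β, P p * (Real.log (P p) - Real.log (pA p.1) - Real.log (pB p.2)) :=
    Finset.sum_lt_sum (fun p _ => hlow p) ⟨(a, b), Finset.mem_univ _, hstrict⟩
  have hsumprod : ∑ p : α × β, pA p.1 * pB p.2 = 1 := by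
    rw [Fintype.sum_prod_type]
    calc ∑ x : α, ∑ y : β, pA x * pB y = ∑ x : α, pA x * ∑ y : β, pB y := by
          refine Finset.sum_congr rfl fun x _ => ?_
          rw [Finset.mul_sum]
      _ = 1 := by rw [hsumB]; simp [hsumA]
  rw [Finset.sum_sub_distrib, hsumP, hsumprod, hG] at hlt
  norm_num at hlt

/-- Lemma `cases`: `X^l` is i.i.d. uniform on `{+,−}^l` (modelled by the uniform
measure on `Fin l → Bool`), `E i x` is the erased version of the source string `x`
produced at terminal `i` (never contradicting `x`), and for every coordinate `t` the
random symbols `E i (X) t` and `E j (X) t` are independent (`I(X_{it};X_{jt}) = 0`)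
for `i ≠ j`.  Then `max_x ∑ᵢ (1/l) ∑ₜ d(xₜ, E i x t) ≥ n − 1`. -/

theorem stmt_12 (n l : ℕ) (hn : 1 ≤ n) (hl : 1 ≤ l)
    (E : Fin n → (Fin l → Bool) → (Fin l → Option Bool))
    (herased : ∀ i x t b, E i x t = some b → x t = b)
    (hindep : ∀ t : Fin l, ∀ i j : Fin n, i ≠ j →
      entropy (PMF.uniformOfFintype (Fin l → Bool)).toMeasure (fun x => E i x t)
        + entropy (PMF.uniformOfFintype (Fin l → Bool)).toMeasure (fun x => E j x t)
        - entropy (PMF.uniformOfFintype (Fin l → Bool)).toMeasure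
            (fun x => (E i x t, E j x t)) = 0) :
    ∃ x : Fin l → Bool,
      (n : ℝ≥0∞) - 1 ≤ ∑ i : Fin n, (l : ℝ≥0∞)⁻¹ * ∑ t, erasureDist (x t) (E i x t) := by
  classical
  set μ := (PMF.uniformOfFintype (Fin l → Bool)).toMeasure with hμdef
  have hms : ∀ s : Set (Fin l → Bool), MeasurableSet s := fun s => (Set.toFinite s).measurableSet
  haveI : IsProbabilityMeasure μ := PMF.toMeasure.isProbabilityMeasure _
  have hzero : ∀ s : Set (Fin l → Bool), μ s = 0 ↔ s = ∅ := by
    intro s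
    rw [hμdef, PMF.toMeasure_apply_eq_zero_iff _ (hms s), PMF.support_uniformOfFintype,
      Set.top_eq_univ, Set.univ_disjoint]
  -- Step A: from independence, contradicting values never both occur
  have stepA : ∀ t : Fin l, ∀ i j : Fin n, i ≠ j → ∀ v : Bool,
      (∃ x, E i x t = some v) → (∃ x, E j x t = some (!v)) → False := by
    rintro t i j hij v ⟨x1, hx1⟩ ⟨x2, hx2⟩
    have ha : μ ((fun x => E i x t) ⁻¹' {some v}) ≠ 0 := by
      rw [Ne, hzero]
      intro hemp
      have : x1 ∈ ((fun x => E i x t) ⁻¹' {some v}) := hx1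
      rw [hemp] at this
      exact this
    have hb : μ ((fun x => E j x t) ⁻¹' {some (!v)}) ≠ 0 := by
      rw [Ne, hzero]
      intro hemp
      have : x2 ∈ ((fun x => E j x t) ⁻¹' {some (!v)}) := hx2
      rw [hemp] at this
      exact this
    have hkey := kl_support hms μ (fun x => E i x t) (fun x => E j x t)
      (hindep t i j hij) (some v) (some (!v)) ha hb
    apply hkey
    rw [hzero]
    ext x
    simp only [Set.mem_preimage, Set.mem_singleton_iff, Prod.mk.injEq, Set.mem_empty_iff_false,
      iff_false, not_and]
    intro h1 h2
    have e1 := herased i x t v h1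
    have e2 := herased j x t (!v) h2
    rw [e1] at e2
    simp at e2
  -- Step B: per coordinate, a good bit value
  have stepB : ∀ t : Fin l, ∃ v : Bool, ∀ x : Fin l → Bool, x t = v →
      (Finset.univ.filter (fun i => E i x t ≠ none)).card ≤ 1 := by
    intro t
    by_cases h1 : ∃ i, ∃ x, E i x t = some true
    · by_cases h2 : ∃ i, ∃ x, E i x t = some false
      · obtain ⟨i1, hi1⟩ := h1
        obtain ⟨i0, hi0⟩ := h2
        have hii : i1 = i0 := by
          by_contra hne
          exact stepA t i1 i0 hne true hi1 (by simpa using hi0)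
        refine ⟨true, fun x _ => ?_⟩
        have hsub : Finset.univ.filter (fun i => E i x t ≠ none) ⊆ {i1} := by
          intro j hj
          simp only [Finset.mem_filter] at hj
          rcases Option.ne_none_iff_exists'.1 hj.2 with ⟨b, hb⟩
          simp only [Finset.mem_singleton]
          by_contra hne
          cases b with
          | false =>
            exact stepA t i1 j (fun hh => hne hh.symm) true hi1 ⟨x, by simpa using hb⟩
          | true =>
            exact stepA t j i0 (by rw [← hii]; exact hne) true ⟨x, hb⟩ (by simpa using hi0)
        calc (Finset.univ.filter (fun i => E i x t ≠ none)).card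
            ≤ ({i1} : Finset (Fin n)).card := Finset.card_le_card hsub
          _ = 1 := Finset.card_singleton _
      · refine ⟨false, fun x hx => ?_⟩
        have hempty : Finset.univ.filter (fun i => E i x t ≠ none) = ∅ := by
          apply Finset.filter_eq_empty_iff.2
          intro i _ hne
          rcases Option.ne_none_iff_exists'.1 hne with ⟨b, hb⟩
          have hbt := herased i x t b hb
          have hbf : b = false := hbt.symm.trans hx
          exact h2 ⟨i, x, by rw [hb, hbf]⟩
        rw [hempty]
        simp
    · refine ⟨true, fun x hx => ?_⟩
      have hempty : Finset.univ.filter (fun i => E i x t ≠ none) = ∅ := by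
        apply Finset.filter_eq_empty_iff.2
        intro i _ hne
        rcases Option.ne_none_iff_exists'.1 hne with ⟨b, hb⟩
        have hbt := herased i x t b hb
        have hbf : b = true := hbt.symm.trans hx
        exact h1 ⟨i, x, by rw [hb, hbf]⟩
      rw [hempty]
      simp
  choose v hv using stepB
  refine ⟨v, ?_⟩
  -- counts
  set c : Fin n → ℕ := fun i => (Finset.univ.filter (fun t => E i v t ≠ none)).card with hc
  set d : Fin n → ℕ := fun i => (Finset.univ.filter (fun t => E i v t = none)).card with hd
  have hdc : ∀ i, d i + c i = l := by
    intro i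
    have := Finset.card_filter_add_card_filter_not (s := (Finset.univ : Finset (Fin l)))
      (fun t => E i v t = none)
    simpa [hc, hd] using this
  have htotal : ∑ i : Fin n, c i ≤ l := by
    have hswap : ∑ i : Fin n, c i
        = ∑ t : Fin l, (Finset.univ.filter (fun i => E i v t ≠ none)).card := by
      simp only [hc, Finset.card_filter]
      rw [Finset.sum_comm]
    rw [hswap]
    calc ∑ t : Fin l, (Finset.univ.filter (fun i => E i v t ≠ none)).card
        ≤ ∑ _t : Fin l, 1 := Finset.sum_le_sum (fun t _ => hv t v rfl)
      _ = l := by simp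
  have hsumd : (n - 1) * l ≤ ∑ i : Fin n, d i := by
    have hsum : ∑ i : Fin n, d i + ∑ i : Fin n, c i = n * l := by
      rw [← Finset.sum_add_distrib]
      simp [hdc, Finset.sum_const, mul_comm]
    have h1 : (n - 1) * l = n * l - l := Nat.sub_one_mul n l
    omega
  -- inner sums
  have hinner : ∀ i : Fin n, ∑ t : Fin l, erasureDist (v t) (E i v t) = (d i : ℝ≥0∞) := by
    intro i
    have hterm : ∀ t : Fin l, erasureDist (v t) (E i v t)
        = if E i v t = none then (1 : ℝ≥0∞) else 0 := by
      intro t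
      rcases hE : E i v t with _ | b
      · simp [erasureDist]
      · have := herased i v t b hE
        simp [erasureDist, this]
    rw [Finset.sum_congr rfl (fun t _ => hterm t)]
    rw [Finset.sum_boole]
  have hl0 : (l : ℝ≥0∞) ≠ 0 := by
    simp only [Ne, Nat.cast_eq_zero]
    omega
  have hltop : (l : ℝ≥0∞) ≠ ⊤ := ENNReal.natCast_ne_top l
  calc (n : ℝ≥0∞) - 1 = ((n - 1 : ℕ) : ℝ≥0∞) := by
        rw [ENNReal.natCast_sub, Nat.cast_one]
    _ = (l : ℝ≥0∞)⁻¹ * (((n - 1) * l : ℕ) : ℝ≥0∞) := by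
        rw [Nat.cast_mul, mul_comm ((l : ℝ≥0∞)⁻¹), mul_assoc,
          ENNReal.mul_inv_cancel hl0 hltop, mul_one]
    _ ≤ (l : ℝ≥0∞)⁻¹ * ((∑ i : Fin n, d i : ℕ) : ℝ≥0∞) := by
        have hcast : (((n - 1) * l : ℕ) : ℝ≥0∞) ≤ ((∑ i : Fin n, d i : ℕ) : ℝ≥0∞) :=
          Nat.cast_le.2 hsumd
        exact mul_le_mul_right hcast _
    _ = ∑ i : Fin n, (l : ℝ≥0∞)⁻¹ * (d i : ℝ≥0∞) := by
        rw [Nat.cast_sum, Finset.mul_sum]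
    _ = ∑ i : Fin n, (l : ℝ≥0∞)⁻¹ * ∑ t, erasureDist (v t) (E i v t) := by
        refine Finset.sum_congr rfl fun i _ => ?_
        rw [hinner i]
end

section
/- Fix integers 1 ≤ k ≤ n and reals D_n, D_k ∈ (0,1). If sup_{λ > 0} [ (n/k − 1)·ln(1+λ) + ln(D_n + λ) − (n/k)·ln(D_k + λ) ] = 0, then D_k ≥ (k/n)·D_n + (n−k)/n. -/
set_option maxHeartbeats 1000000

lemma log_lb {x : ℝ} (hx : -(1/2) ≤ x) : x - 2*x^2 ≤ Real.log (1+x) := by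
  have h1 : (0:ℝ) < 1 + x := by linarith
  have h2 : Real.log (1/(1+x)) ≤ 1/(1+x) - 1 :=
    Real.log_le_sub_one_of_pos (by positivity)
  rw [one_div, Real.log_inv, inv_eq_one_div] at h2
  have h3 : 1 - 1/(1+x) ≤ Real.log (1+x) := by linarith
  have h4 : x - 2*x^2 ≤ 1 - 1/(1+x) := by
    have h5 : 1 - 1/(1+x) = x/(1+x) := by field_simp; ring
    rw [h5, le_div_iff₀ h1]
    nlinarith [mul_nonneg (sq_nonneg x) (by linarith : (0:ℝ) ≤ 1+2*x)]
  linarith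

/-- Analytic core of Theorem 10: if
`sup_{λ>0} [(n/k − 1)ln(1+λ) + ln(Dₙ+λ) − (n/k)ln(D_k+λ)] = 0`,
then `D_k ≥ (k/n)Dₙ + (n−k)/n`. -/
theorem stmt_15 (n k : ℕ) (hk : 1 ≤ k) (hkn : k ≤ n) (Dn Dk : ℝ)
    (hDn : Dn ∈ Set.Ioo (0 : ℝ) 1) (hDk : Dk ∈ Set.Ioo (0 : ℝ) 1)
    (hsup : IsLUB {y : ℝ | ∃ lam : ℝ, 0 < lam ∧
        y = ((n : ℝ)/k - 1) * Real.log (1 + lam) + Real.log (Dn + lam)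
              - ((n : ℝ)/k) * Real.log (Dk + lam)} 0) :
    (k/(n : ℝ)) * Dn + ((n : ℝ) - k)/n ≤ Dk := by
  obtain ⟨hDn0, hDn1⟩ := hDn
  obtain ⟨hDk0, hDk1⟩ := hDk
  have hk' : (0:ℝ) < k := by exact_mod_cast hk
  have hn : (0:ℝ) < n := lt_of_lt_of_le hk' (by exact_mod_cast hkn)
  set r : ℝ := (n:ℝ)/k with hrdef
  have hr1 : 1 ≤ r := (one_le_div hk').mpr (by exact_mod_cast hkn)
  by_contra hcon
  push_neg at hcon
  rw [div_mul_eq_mul_div, ← add_div, lt_div_iff₀ hn] at hcon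
  have hrk : r * k = n := div_mul_cancel₀ _ (ne_of_gt hk')
  set c : ℝ := (r-1)*(1-Dk) + (Dn - Dk) with hcdef
  have hc : 0 < c := by
    have : c * k = (n:ℝ) - k + k*Dn - n*Dk := by
      rw [hcdef]; nlinarith [hrk]
    nlinarith [hcon, hk']
  set M : ℝ := 2*((r-1)*(1-Dk)^2 + (Dn-Dk)^2) with hMdef
  have hM0 : 0 ≤ M := by
    nlinarith [sq_nonneg (1-Dk), sq_nonneg (Dn-Dk), mul_nonneg (by linarith : (0:ℝ) ≤ r-1) (sq_nonneg (1-Dk))]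
  set lam : ℝ := max 2 (M/c + 1) with hlamdef
  have hlam2 : (2:ℝ) ≤ lam := le_max_left _ _
  have hlamM : M/c + 1 ≤ lam := le_max_right _ _
  have hlam0 : (0:ℝ) < lam := by linarith
  set S : ℝ := Dk + lam with hSdef
  have hS2 : (2:ℝ) < S := by rw [hSdef]; linarith
  have hS0 : (0:ℝ) < S := by linarith
  set a : ℝ := (1-Dk)/S with hadef
  set b : ℝ := (Dn-Dk)/S with hbdef
  have ha0 : 0 < a := div_pos (by linarith) hS0
  have hb : -(1/2) ≤ b := by
    rw [hbdef, le_div_iff₀ hS0]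
    nlinarith
  have haS : a * S = 1 - Dk := div_mul_cancel₀ _ (ne_of_gt hS0)
  have hbS : b * S = Dn - Dk := div_mul_cancel₀ _ (ne_of_gt hS0)
  have h1a : (0:ℝ) < 1 + a := by linarith
  have h1b : (0:ℝ) < 1 + b := by linarith
  -- decompose logs
  have hL1 : Real.log (1 + lam) = Real.log S + Real.log (1+a) := by
    have : 1 + lam = S * (1 + a) := by
      linear_combination -haS - hSdef
    rw [this, Real.log_mul (ne_of_gt hS0) (ne_of_gt h1a)]
  have hL2 : Real.log (Dn + lam) = Real.log S + Real.log (1+b) := by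
    have : Dn + lam = S * (1 + b) := by
      linear_combination -hbS - hSdef
    rw [this, Real.log_mul (ne_of_gt hS0) (ne_of_gt h1b)]
  -- the value at lam is ≤ 0
  have hmem : (r - 1) * Real.log (1 + lam) + Real.log (Dn + lam)
      - r * Real.log (Dk + lam) ∈ {y : ℝ | ∃ lam : ℝ, 0 < lam ∧
        y = ((n : ℝ)/k - 1) * Real.log (1 + lam) + Real.log (Dn + lam)
              - ((n : ℝ)/k) * Real.log (Dk + lam)} := ⟨lam, hlam0, rfl⟩
  have hle0 : (r - 1) * Real.log (1 + lam) + Real.log (Dn + lam)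
      - r * Real.log (Dk + lam) ≤ 0 := hsup.1 hmem
  have hform : (r - 1) * Real.log (1 + lam) + Real.log (Dn + lam)
      - r * Real.log (Dk + lam) = (r-1) * Real.log (1+a) + Real.log (1+b) := by
    rw [hL1, hL2, ← hSdef]; ring
  -- lower bounds
  have hla : a - 2*a^2 ≤ Real.log (1+a) := log_lb (by linarith)
  have hlb : b - 2*b^2 ≤ Real.log (1+b) := log_lb hb
  -- key positivity
  have hcS : M + c * Dk + c ≤ c * S := by
    have h1 : c * (M/c + 1) = M + c := by rw [mul_add, mul_one, mul_div_cancel₀ _ (ne_of_gt hc)]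
    have h2 : c * (M/c + 1) ≤ c * lam := by
      exact mul_le_mul_of_nonneg_left hlamM (le_of_lt hc)
    rw [hSdef]; nlinarith
  have hkey : 0 < c * S - M := by nlinarith [mul_pos hc hDk0]
  have hpos : 0 < (r-1)*(a - 2*a^2) + (b - 2*b^2) := by
    have heq : (r-1)*(a - 2*a^2) + (b - 2*b^2) = (c * S - M) / S^2 := by
      rw [hcdef, hMdef, hadef, hbdef]; field_simp; ring
    rw [heq]
    positivity
  have : 0 < (r-1) * Real.log (1+a) + Real.log (1+b) := by
    have := mul_le_mul_of_nonneg_left hla (by linarith : (0:ℝ) ≤ r-1)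
    linarith
  linarith [hform ▸ hle0]
end

section
/- Suppose descriptions of a length-l binary source each have rate R (i.e., each message takes at most 2^{lR} values), and the decoder receiving any k of the n messages reconstructs under erasure distortion with expected distortion at most D_k where kR = 1 − D_k. Then for every subset {s1,...,sk} of k encoders, I_k(f_{s1}; ...; f_{sk}) = 0, i.e., the k messages are mutually independent, when the source is i.i.d. uniform on {+,−}^l. -/
open MeasureTheory ENNReal

open MeasureTheory ENNReal Finset

lemma uniform_fiber {Ω : Type*} [Fintype Ω] [Nonempty Ω] [MeasurableSpace Ω]
    [MeasurableSingletonClass Ω] {β : Type*} (h : Ω → β) (b : β)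
    [DecidablePred fun x => h x = b] :
    ((PMF.uniformOfFintype Ω).toMeasure (h ⁻¹' {b})).toReal
      = (Finset.univ.filter fun x => h x = b).card / Fintype.card Ω := by
  rw [PMF.toMeasure_apply_fintype]
  have h1 : ∀ x : Ω, (h ⁻¹' {b}).indicator (⇑(PMF.uniformOfFintype Ω)) x
      = if h x = b then ((Fintype.card Ω : ℝ≥0∞))⁻¹ else 0 := by
    intro x
    by_cases hx : h x = b <;> simp [Set.indicator, hx]
  simp only [h1]
  rw [← Finset.sum_filter, Finset.sum_const, nsmul_eq_mul, ENNReal.toReal_mul]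
  simp [ENNReal.toReal_inv, div_eq_mul_inv]

lemma sum_fiber_card {Ω : Type*} [Fintype Ω] {β : Type*} [Fintype β] [DecidableEq β]
    (h : Ω → β) :
    ∑ b : β, (Finset.univ.filter fun x => h x = b).card = Fintype.card Ω :=
  (Finset.card_eq_sum_card_fiberwise (f := h) (s := univ) (t := univ)
    (fun x _ => mem_univ _)).symm

lemma sum_uniform_fiber {Ω : Type*} [Fintype Ω] [Nonempty Ω] [MeasurableSpace Ω]
    [MeasurableSingletonClass Ω] {β : Type*} [Fintype β] [DecidableEq β] (h : Ω → β) :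
    ∑ b : β, ((PMF.uniformOfFintype Ω).toMeasure (h ⁻¹' {b})).toReal = 1 := by
  classical
  have := sum_fiber_card h
  simp only [uniform_fiber]
  rw [← Finset.sum_div]
  rw [show ∑ b : β, ((Finset.univ.filter fun x => h x = b).card : ℝ)
      = ((∑ b : β, (Finset.univ.filter fun x => h x = b).card : ℕ) : ℝ) by push_cast; ring]
  rw [this]
  have : (0:ℝ) < Fintype.card Ω := by exact_mod_cast Fintype.card_pos
  field_simp
open Real Finset

lemma gibbs {β : Type*} [Fintype β] (p q : β → ℝ) (hp : ∀ b, 0 ≤ p b)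
    (hq : ∀ b, 0 ≤ q b) (hpq : ∀ b, 0 < p b → 0 < q b)
    (hq1 : ∑ b, q b ≤ ∑ b, p b) :
    -∑ b, p b * Real.logb 2 (p b) ≤ -∑ b, p b * Real.logb 2 (q b) := by
  have key : ∀ b, p b - q b ≤ p b * (Real.log (p b) - Real.log (q b)) := by
    intro b
    rcases eq_or_lt_of_le (hp b) with h | h
    · simp [← h]; exact hq b
    · have hqb := hpq b h
      have h2 : Real.log (q b / p b) ≤ q b / p b - 1 :=
        Real.log_le_sub_one_of_pos (div_pos hqb h)
      rw [Real.log_div (ne_of_gt hqb) (ne_of_gt h)] at h2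
      have := mul_le_mul_of_nonneg_left h2 (le_of_lt h)
      have hne : p b ≠ 0 := ne_of_gt h
      nlinarith [mul_div_cancel₀ (q b) hne]
  have hsum : 0 ≤ ∑ b, p b * (Real.log (p b) - Real.log (q b)) := by
    calc (0:ℝ) ≤ ∑ b, (p b - q b) := by
          rw [Finset.sum_sub_distrib]; linarith
      _ ≤ _ := Finset.sum_le_sum (fun b _ => key b)
  have hlog2 : (0:ℝ) < Real.log 2 := Real.log_pos (by norm_num)
  have h3 : 0 ≤ ∑ b, p b * (Real.logb 2 (p b) - Real.logb 2 (q b)) := by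
    have h4 : ∑ b, p b * (Real.logb 2 (p b) - Real.logb 2 (q b))
        = (∑ b, p b * (Real.log (p b) - Real.log (q b))) / Real.log 2 := by
      rw [Finset.sum_div]
      refine Finset.sum_congr rfl (fun b _ => ?_)
      simp [Real.logb, div_sub_div_same, mul_div_assoc]
    rw [h4]; positivity
  rw [neg_le_neg_iff]
  simp only [mul_sub] at h3
  rw [Finset.sum_sub_distrib] at h3
  linarith

lemma entropy_le_logb_card {β : Type*} [Fintype β] [Nonempty β] (p : β → ℝ)
    (hp : ∀ b, 0 ≤ p b) (h1 : ∑ b, p b = 1) :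
    -∑ b, p b * Real.logb 2 (p b) ≤ Real.logb 2 (Fintype.card β) := by
  have hcard : (0:ℝ) < Fintype.card β := by exact_mod_cast Fintype.card_pos
  have := gibbs p (fun _ => ((Fintype.card β : ℝ))⁻¹) hp
    (fun _ => by positivity) (fun _ _ => by positivity)
    (by rw [Finset.sum_const, h1, card_univ, nsmul_eq_mul]; field_simp; exact le_refl _)
  refine this.trans (le_of_eq ?_)
  rw [← Finset.sum_mul, h1, one_mul, Real.logb_inv, neg_neg]

lemma marg_group {k : ℕ} {β : Fin k → Type*} [∀ j, Fintype (β j)]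
    [∀ j, DecidableEq (β j)] (p : ((j : Fin k) → β j) → ℝ) (j : Fin k)
    (L : β j → ℝ) :
    ∑ a, (∑ m, if m j = a then p m else 0) * L a = ∑ m, p m * L (m j) := by
  simp only [Finset.sum_mul, ite_mul, zero_mul]
  rw [Finset.sum_comm]
  refine Finset.sum_congr rfl (fun m _ => ?_)
  have key : ∀ a, (if m j = a then p m * L a else 0)
      = (if m j = a then p m * L (m j) else 0) := by
    intro a
    by_cases h : m j = a
    · rw [if_pos h, if_pos h, ← h]
    · rw [if_neg h, if_neg h]
  rw [Finset.sum_congr rfl (fun a _ => key a), Finset.sum_ite_eq]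
  simp

lemma subadd {k : ℕ} {β : Fin k → Type*} [∀ j, Fintype (β j)]
    [∀ j, DecidableEq (β j)]
    (p : ((j : Fin k) → β j) → ℝ) (hp : ∀ m, 0 ≤ p m) (h1 : ∑ m, p m = 1) :
    -∑ m, p m * Real.logb 2 (p m)
      ≤ ∑ j, -∑ a, (∑ m, if m j = a then p m else 0)
          * Real.logb 2 (∑ m, if m j = a then p m else 0) := by
  set marg : (j : Fin k) → β j → ℝ := fun j a => ∑ m, if m j = a then p m else 0 with hmarg
  have hmnn : ∀ j a, 0 ≤ marg j a := fun j a =>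
    Finset.sum_nonneg (fun m _ => by by_cases h : m j = a <;> simp [h, hp m])
  have hmsum : ∀ j, ∑ a, marg j a = 1 := by
    intro j
    rw [hmarg]
    simp only
    rw [Finset.sum_comm, ← h1]
    refine Finset.sum_congr rfl (fun m _ => ?_)
    rw [Finset.sum_ite_eq]
    simp
  have hmge : ∀ (m) (j : Fin k), p m ≤ marg j (m j) := by
    intro m j
    rw [hmarg]
    simp only
    have := Finset.single_le_sum
      (f := fun m' : (j : Fin k) → β j => if m' j = m j then p m' else 0)
      (fun m' _ => by by_cases h : m' j = m j <;> simp [h, hp m']) (Finset.mem_univ m)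
    simpa using this
  set q : ((j : Fin k) → β j) → ℝ := fun m => ∏ j, marg j (m j) with hq
  have hqnn : ∀ m, 0 ≤ q m := fun m => Finset.prod_nonneg (fun j _ => hmnn j (m j))
  have hqpos : ∀ m, 0 < p m → 0 < q m := fun m hm =>
    Finset.prod_pos (fun j _ => lt_of_lt_of_le hm (hmge m j))
  have hqsum : ∑ m, q m = ∑ m, p m := by
    rw [h1, hq]
    rw [← Fintype.prod_sum (fun j a => marg j a)]
    simp [hmsum]
  have h2 := gibbs p q hp hqnn hqpos (le_of_eq hqsum)
  refine h2.trans (le_of_eq ?_)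
  have h3 : ∀ m, p m * Real.logb 2 (q m) = ∑ j, p m * Real.logb 2 (marg j (m j)) := by
    intro m
    rcases eq_or_lt_of_le (hp m) with h | h
    · simp [← h]
    · rw [hq]
      simp only
      rw [Real.logb_prod _ _ (fun j _ => ne_of_gt (lt_of_lt_of_le h (hmge m j)))]
      rw [Finset.mul_sum]
    
  rw [Finset.sum_congr rfl (fun m _ => h3 m), Finset.sum_comm]
  rw [← Finset.sum_neg_distrib]
  refine Finset.sum_congr rfl (fun j _ => ?_)
  rw [neg_inj.mpr (marg_group p j (fun a => Real.logb 2 (marg j a))).symm]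

/-- Equation (7) of Appendix G: with an i.i.d. uniform binary source of length `l`,
deterministic encoders `f i` of rate `R` (at most `2^{lR}` messages each), and decoders
achieving expected erasure distortion at most `D_k` from every `k` of the `n` messages,
where `kR = 1 − D_k` (no excess rate), every `k` messages are mutually independent:
`I_k(f_{s₁};…;f_{s_k}) = ∑ⱼ H(f_{sⱼ}) − H(f_{s₁},…,f_{s_k}) = 0`. -/
theorem stmt_16 (n k l : ℕ) (hk : 1 ≤ k) (hkn : k ≤ n) (hl : 1 ≤ l)
    (R Dk : ℝ) (hner : (k : ℝ) * R = 1 - Dk) (hDk : 0 ≤ Dk)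
    (M : Fin n → ℕ) (hM : ∀ i, 1 ≤ M i)
    (hrate : ∀ i, (M i : ℝ) ≤ (2 : ℝ) ^ ((l : ℝ) * R))
    (f : (i : Fin n) → (Fin l → Bool) → Fin (M i))
    (g : (s : Fin k → Fin n) → ((j : Fin k) → Fin (M (s j))) → (Fin l → Option Bool))
    (hdist : ∀ s : Fin k → Fin n, Function.Injective s →
      ∑ x : Fin l → Bool, ((Fintype.card (Fin l → Bool) : ℝ≥0∞))⁻¹ *
          ((l : ℝ≥0∞)⁻¹ * ∑ t, erasureDist (x t) (g s (fun j => f (s j) x) t))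
        ≤ ENNReal.ofReal Dk)
    (s : Fin k → Fin n) (hs : Function.Injective s) :
    (∑ j, entropy (PMF.uniformOfFintype (Fin l → Bool)).toMeasure (fun x => f (s j) x))
      - entropy (PMF.uniformOfFintype (Fin l → Bool)).toMeasure
          (fun x j => f (s j) x) = 0 := by
  classical
  have hΩcard : Fintype.card (Fin l → Bool) = 2 ^ l := by simp
  have hΩpos : (0:ℝ) < (2:ℝ) ^ l := by positivity
  set μ := (PMF.uniformOfFintype (Fin l → Bool)).toMeasure with hμ
  -- joint and marginal probabilities
  set Pm : ((j : Fin k) → Fin (M (s j))) → ℝ :=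
    fun m => (μ ((fun x (j : Fin k) => f (s j) x) ⁻¹' {m})).toReal with hPmdef
  set Pj : (j : Fin k) → Fin (M (s j)) → ℝ :=
    fun j a => (μ ((fun x => f (s j) x) ⁻¹' {a})).toReal with hPjdef
  set cnt : ((j : Fin k) → Fin (M (s j))) → ℕ :=
    fun m => (Finset.univ.filter fun x => (fun j => f (s j) x) = m).card with hcntdef
  have hPm_eq : ∀ m, Pm m = (cnt m : ℝ) / (2:ℝ)^l := by
    intro m
    rw [hPmdef]
    simp only
    rw [uniform_fiber (fun x (j : Fin k) => f (s j) x) m, hΩcard]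
    norm_num
    rfl
  have hPm_nn : ∀ m, 0 ≤ Pm m := fun m => ENNReal.toReal_nonneg
  have hPj_nn : ∀ j a, 0 ≤ Pj j a := fun j a => ENNReal.toReal_nonneg
  have hPm_sum : ∑ m, Pm m = 1 := sum_uniform_fiber _
  have hPj_sum : ∀ j, ∑ a, Pj j a = 1 := fun j => sum_uniform_fiber _
  -- marginal identity
  have hmarg : ∀ (j : Fin k) (a : Fin (M (s j))),
      Pj j a = ∑ m, if m j = a then Pm m else 0 := by
    intro j a
    have hcard : (Finset.univ.filter fun x => f (s j) x = a).card
        = ∑ m, if m j = a then cnt m else 0 := by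
      rw [Finset.card_eq_sum_card_fiberwise
        (f := fun x (j : Fin k) => f (s j) x)
        (t := Finset.univ.filter fun m => m j = a)
        (fun x hx => by
          simp only [Finset.mem_coe, Finset.mem_filter, Finset.mem_univ, true_and] at hx ⊢
          exact hx)]
      rw [Finset.sum_filter]
      refine Finset.sum_congr rfl (fun m _ => ?_)
      by_cases hmj : m j = a
      · rw [if_pos hmj, if_pos hmj, hcntdef]
        congr 1
        ext x
        simp only [Finset.mem_filter, Finset.mem_univ, true_and]
        constructor
        · rintro ⟨-, h2⟩; exact h2
        · intro h2
          refine ⟨?_, h2⟩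
          rw [show f (s j) x = (fun j => f (s j) x) j from rfl, h2, hmj]
      · rw [if_neg hmj, if_neg hmj]
    have hPj_eq : Pj j a = ((Finset.univ.filter fun x => f (s j) x = a).card : ℝ) / (2:ℝ)^l := by
      rw [hPjdef]
      simp only
      rw [uniform_fiber (fun x => f (s j) x) a, hΩcard]
      norm_num
    rw [hPj_eq, hcard]
    push_cast
    rw [Finset.sum_div]
    refine Finset.sum_congr rfl (fun m _ => ?_)
    by_cases hmj : m j = a
    · rw [if_pos hmj, if_pos hmj, hPm_eq]
    · rw [if_neg hmj, if_neg hmj, zero_div]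
  -- entropies
  have hent_joint : entropy μ (fun x (j : Fin k) => f (s j) x)
      = -∑ m, Pm m * Real.logb 2 (Pm m) := rfl
  have hent_j : ∀ j, entropy μ (fun x => f (s j) x)
      = -∑ a, Pj j a * Real.logb 2 (Pj j a) := fun j => rfl
  -- subadditivity
  have hsub : entropy μ (fun x (j : Fin k) => f (s j) x)
      ≤ ∑ j, entropy μ (fun x => f (s j) x) := by
    rw [hent_joint]
    refine (subadd Pm hPm_nn hPm_sum).trans (le_of_eq ?_)
    refine Finset.sum_congr rfl (fun j _ => ?_)
    rw [hent_j j]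
    congr 1
    refine Finset.sum_congr rfl (fun a _ => ?_)
    rw [← hmarg j a]
  -- upper bound per coordinate
  have hj_le : ∀ j, entropy μ (fun x => f (s j) x) ≤ (l:ℝ) * R := by
    intro j
    haveI : Nonempty (Fin (M (s j))) := ⟨⟨0, hM _⟩⟩
    rw [hent_j j]
    refine (entropy_le_logb_card (Pj j) (hPj_nn j) (hPj_sum j)).trans ?_
    rw [Fintype.card_fin]
    have hMpos : (0:ℝ) < (M (s j) : ℝ) := by exact_mod_cast hM (s j)
    have h2 : (0:ℝ) < (2:ℝ) ^ ((l:ℝ) * R) := Real.rpow_pos_of_pos (by norm_num) _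
    have := (Real.logb_le_logb (b := 2) (by norm_num) hMpos h2).mpr (hrate (s j))
    rwa [Real.logb_rpow (by norm_num) (by norm_num)] at this
  -- erasure count
  set e : ((j : Fin k) → Fin (M (s j))) → ℕ :=
    fun m => (Finset.univ.filter fun t => g s m t = none).card with hedef
  -- no errors
  have herr : ∀ (x : Fin l → Bool) (t : Fin l) (b : Bool),
      g s (fun j => f (s j) x) t = some b → b = x t := by
    intro x t b hgt
    by_contra hne
    have htop : erasureDist (x t) (g s (fun j => f (s j) x) t) = ⊤ := by
      rw [hgt]
      simp [erasureDist, hne]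
    have hinner : ∑ t', erasureDist (x t') (g s (fun j => f (s j) x) t') = ⊤ :=
      ENNReal.sum_eq_top.mpr ⟨t, Finset.mem_univ t, htop⟩
    have hlne : ((l : ℝ≥0∞))⁻¹ ≠ 0 := ENNReal.inv_ne_zero.mpr (ENNReal.natCast_ne_top l)
    have hcne : ((Fintype.card (Fin l → Bool) : ℝ≥0∞))⁻¹ ≠ 0 :=
      ENNReal.inv_ne_zero.mpr (ENNReal.natCast_ne_top _)
    have hterm : ((Fintype.card (Fin l → Bool) : ℝ≥0∞))⁻¹ *
        ((l : ℝ≥0∞)⁻¹ * ∑ t', erasureDist (x t') (g s (fun j => f (s j) x) t')) = ⊤ := by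
      rw [hinner, ENNReal.mul_top hlne, ENNReal.mul_top hcne]
    have htot : ∑ x' : Fin l → Bool, ((Fintype.card (Fin l → Bool) : ℝ≥0∞))⁻¹ *
        ((l : ℝ≥0∞)⁻¹ * ∑ t', erasureDist (x' t') (g s (fun j => f (s j) x') t')) = ⊤ :=
      ENNReal.sum_eq_top.mpr ⟨x, Finset.mem_univ x, hterm⟩
    have := hdist s hs
    rw [htot, top_le_iff] at this
    exact ENNReal.ofReal_ne_top this
  -- per-source distortion = erasure count
  have hperx : ∀ x : Fin l → Bool,
      ∑ t, erasureDist (x t) (g s (fun j => f (s j) x) t)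
        = (e (fun j => f (s j) x) : ℝ≥0∞) := by
    intro x
    rw [hedef]
    simp only
    rw [← Finset.sum_boole]
    refine Finset.sum_congr rfl (fun t _ => ?_)
    rcases hgt : g s (fun j => f (s j) x) t with _ | b
    · simp [erasureDist]
    · have hb := herr x t b hgt
      simp [erasureDist, hb]
  -- total erasure bound
  have hE : ∑ x : Fin l → Bool, (e (fun j => f (s j) x) : ℝ)
      ≤ (2:ℝ)^l * ((l:ℝ) * Dk) := by
    have hd := hdist s hs
    simp only [hperx] at hd
    set c := Fintype.card (Fin l → Bool) with hc
    have hc1 : 1 ≤ c := Fintype.card_pos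
    have hrw : ∑ x : Fin l → Bool, ((c : ℝ≥0∞))⁻¹ *
          ((l : ℝ≥0∞)⁻¹ * (e (fun j => f (s j) x) : ℝ≥0∞))
        = ((c : ℝ≥0∞))⁻¹ * ((l : ℝ≥0∞)⁻¹ *
          ((∑ x : Fin l → Bool, e (fun j => f (s j) x) : ℕ) : ℝ≥0∞)) := by
      rw [← Finset.mul_sum, ← Finset.mul_sum]
      push_cast
      ring
    rw [hrw] at hd
    have hreal := ENNReal.toReal_mono ENNReal.ofReal_ne_top hd
    rw [ENNReal.toReal_ofReal hDk] at hreal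
    rw [ENNReal.toReal_mul, ENNReal.toReal_mul, ENNReal.toReal_inv, ENNReal.toReal_inv] at hreal
    simp only [ENNReal.toReal_natCast] at hreal
    have hcpos : (0:ℝ) < c := by exact_mod_cast hc1
    have hlpos : (0:ℝ) < l := by exact_mod_cast hl
    push_cast at hreal ⊢
    rw [inv_mul_le_iff₀ hcpos, inv_mul_le_iff₀ hlpos] at hreal
    have hc2 : (c : ℝ) = (2:ℝ)^l := by rw [hΩcard]; push_cast; ring
    rw [hc2] at hreal
    linarith
  -- fiber size bound
  have hcnt_le : ∀ m, (cnt m : ℝ) ≤ (2:ℝ) ^ (e m) := by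
    intro m
    have hnat : cnt m ≤ 2 ^ (e m) := by
      rw [hcntdef]
      simp only
      rw [← Fintype.card_subtype]
      have hinj : Function.Injective
          (fun (x : {x : Fin l → Bool // (fun j => f (s j) x) = m})
            (t : {t : Fin l // g s m t = none}) => x.1 t.1) := by
        intro x y hxy
        apply Subtype.ext
        funext t
        by_cases hgt : g s m t = none
        · exact congrFun hxy ⟨t, hgt⟩
        · obtain ⟨b, hb⟩ := Option.ne_none_iff_exists'.mp hgt
          have hx : g s (fun j => f (s j) x.1) t = some b := by rw [x.2]; exact hb
          have hy : g s (fun j => f (s j) y.1) t = some b := by rw [y.2]; exact hb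
          rw [← herr x.1 t b hx, ← herr y.1 t b hy]
      have := Fintype.card_le_of_injective _ hinj
      refine this.trans (le_of_eq ?_)
      rw [Fintype.card_fun, Fintype.card_bool, Fintype.card_subtype]
    calc (cnt m : ℝ) ≤ ((2 ^ (e m) : ℕ) : ℝ) := by exact_mod_cast hnat
      _ = (2:ℝ) ^ (e m) := by push_cast; ring
  -- grouping
  have hgroup : ∑ m, (cnt m : ℝ) * (e m : ℝ)
      = ∑ x : Fin l → Bool, (e (fun j => f (s j) x) : ℝ) := by
    rw [← Finset.sum_fiberwise_of_maps_to
      (g := fun x (j : Fin k) => f (s j) x) (t := Finset.univ)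
      (fun x _ => Finset.mem_univ _) (fun x => (e (fun j => f (s j) x) : ℝ))]
    refine Finset.sum_congr rfl (fun m _ => ?_)
    have hcg : ∀ x ∈ Finset.univ.filter (fun x => (fun j => f (s j) x) = m),
        ((e fun j => f (s j) x : ℕ) : ℝ) = ((e m : ℕ) : ℝ) := by
      intro x hx
      rw [Finset.mem_filter] at hx
      rw [hx.2]
    rw [Finset.sum_congr rfl hcg, Finset.sum_const, nsmul_eq_mul, hcntdef]
  -- entropy lower bound
  have hlow : (l:ℝ) * (1 - Dk) ≤ entropy μ (fun x (j : Fin k) => f (s j) x) := by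
    rw [hent_joint]
    have hterm : ∀ m, Pm m * ((l:ℝ) - (e m : ℝ)) ≤ -(Pm m * Real.logb 2 (Pm m)) := by
      intro m
      rcases eq_or_lt_of_le (hPm_nn m) with h | hpos
      · simp [← h]
      · have hub : Pm m ≤ (2:ℝ)^(e m) / (2:ℝ)^l := by
          rw [hPm_eq]
          gcongr
          exact hcnt_le m
        have h2 : (0:ℝ) < (2:ℝ)^(e m) / (2:ℝ)^l := by positivity
        have hlogb := (Real.logb_le_logb (b := 2) (by norm_num) hpos h2).mpr hub
        rw [Real.logb_div (by positivity) (by positivity), Real.logb_pow,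
          Real.logb_pow, Real.logb_self_eq_one (by norm_num)] at hlogb
        nlinarith [mul_le_mul_of_nonneg_left hlogb (le_of_lt hpos)]
    have hsum1 : ∑ m, Pm m * (e m : ℝ) ≤ (l:ℝ) * Dk := by
      have heq : ∑ m, Pm m * (e m : ℝ) = (∑ m, (cnt m : ℝ) * (e m : ℝ)) / (2:ℝ)^l := by
        rw [Finset.sum_div]
        refine Finset.sum_congr rfl (fun m _ => ?_)
        rw [hPm_eq, div_mul_eq_mul_div]
      rw [heq, hgroup, div_le_iff₀ hΩpos]
      calc ∑ x : Fin l → Bool, (e (fun j => f (s j) x) : ℝ)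
          ≤ (2:ℝ)^l * ((l:ℝ) * Dk) := hE
        _ = (l:ℝ) * Dk * (2:ℝ)^l := by ring
    have hsplit : ∑ m, Pm m * ((l:ℝ) - (e m : ℝ))
        = (l:ℝ) - ∑ m, Pm m * (e m : ℝ) := by
      simp only [mul_sub]
      rw [Finset.sum_sub_distrib, ← Finset.sum_mul, hPm_sum, one_mul]
    calc (l:ℝ) * (1 - Dk) = (l:ℝ) - (l:ℝ) * Dk := by ring
      _ ≤ (l:ℝ) - ∑ m, Pm m * (e m : ℝ) := by linarith
      _ = ∑ m, Pm m * ((l:ℝ) - (e m : ℝ)) := hsplit.symm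
      _ ≤ ∑ m, -(Pm m * Real.logb 2 (Pm m)) := Finset.sum_le_sum (fun m _ => hterm m)
      _ = -∑ m, Pm m * Real.logb 2 (Pm m) := by rw [Finset.sum_neg_distrib]
  -- combine
  have hsum_le : ∑ j, entropy μ (fun x => f (s j) x) ≤ (k:ℝ) * ((l:ℝ) * R) := by
    refine (Finset.sum_le_sum (fun j _ => hj_le j)).trans (le_of_eq ?_)
    rw [Finset.sum_const, Finset.card_univ, Fintype.card_fin, nsmul_eq_mul]
  have hkey : (k:ℝ) * ((l:ℝ) * R) = (l:ℝ) * (1 - Dk) := by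
    rw [← hner]; ring
  have := hsub
  linarith [hsum_le, hlow, hsub]
end

section
/- Let n ≥ k ≥ 1 and m ≤ k/2 with m dividing n. Partition n messages into n/m disjoint groups of m. If every k of the n messages are mutually independent (I_k of every k-subset equals 0) under an i.i.d. uniform binary source, and each group reconstruction X_{M_i}^l is an erased version of the source, then the worst-case m-message erasure distortion satisfies D_m ≥ 1 − m/n. -/
open MeasureTheory ENNReal

lemma gibbs_aux {ι : Type*} [Fintype ι] (p q : ι → ℝ)
    (hp0 : ∀ a, 0 ≤ p a) (hq0 : ∀ a, 0 ≤ q a)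
    (hpq : ∀ a, p a ≠ 0 → q a ≠ 0)
    (hp1 : ∑ a, p a = 1) (hq1 : ∑ a, q a = 1)
    (h : ∑ a, p a * Real.logb 2 (p a) = ∑ a, p a * Real.logb 2 (q a)) :
    ∀ a, p a = q a := by
  classical
  set S : Finset ι := Finset.univ.filter (fun a => p a ≠ 0) with hS
  have hmemS : ∀ a ∈ S, p a ≠ 0 := by intro a ha; exact (Finset.mem_filter.mp ha).2
  have hppos : ∀ a ∈ S, 0 < p a := fun a ha => lt_of_le_of_ne (hp0 a) (Ne.symm (hmemS a ha))
  have hqpos : ∀ a ∈ S, 0 < q a := fun a ha =>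
    lt_of_le_of_ne (hq0 a) (Ne.symm (hpq a (hmemS a ha)))
  have hpS : ∑ a ∈ S, p a = 1 := by
    rw [← hp1]; exact Finset.sum_filter_ne_zero _
  have hqS : ∑ a ∈ S, q a ≤ 1 := by
    rw [← hq1]
    exact Finset.sum_le_sum_of_subset_of_nonneg (Finset.subset_univ _)
      (fun a _ _ => hq0 a)
  -- E = 0
  have hE : ∑ a ∈ S, p a * (Real.logb 2 (q a) - Real.logb 2 (p a)) = 0 := by
    have : ∑ a : ι, p a * (Real.logb 2 (q a) - Real.logb 2 (p a)) = 0 := by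
      have hsplit : ∑ a : ι, p a * (Real.logb 2 (q a) - Real.logb 2 (p a))
          = (∑ a : ι, p a * Real.logb 2 (q a)) - ∑ a : ι, p a * Real.logb 2 (p a) := by
        rw [← Finset.sum_sub_distrib]
        exact Finset.sum_congr rfl (fun a _ => by ring)
      rw [hsplit]
      linarith
    rw [← this]
    refine Finset.sum_subset (Finset.subset_univ _) ?_
    intro a _ ha
    have : p a = 0 := by
      by_contra hc
      exact ha (Finset.mem_filter.mpr ⟨Finset.mem_univ a, hc⟩)
    simp [this]
  have hlog2 : (0:ℝ) < Real.log 2 := Real.log_pos (by norm_num)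
  have hterm : ∀ a ∈ S,
      p a * (Real.logb 2 (q a) - Real.logb 2 (p a)) ≤ (q a - p a) / Real.log 2 := by
    intro a ha
    have hp' := hppos a ha
    have hq' := hqpos a ha
    have hlb : Real.logb 2 (q a) - Real.logb 2 (p a) = Real.log (q a / p a) / Real.log 2 := by
      rw [Real.log_div (ne_of_gt hq') (ne_of_gt hp')]
      simp [Real.logb, sub_div]
    rw [hlb]
    have hle : Real.log (q a / p a) ≤ q a / p a - 1 :=
      Real.log_le_sub_one_of_pos (div_pos hq' hp')
    have : p a * (Real.log (q a / p a) / Real.log 2)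
        ≤ p a * ((q a / p a - 1) / Real.log 2) := by
      gcongr
    refine this.trans_eq ?_
    field_simp
  have hRHS : ∑ a ∈ S, (q a - p a) / Real.log 2 ≤ 0 := by
    rw [← Finset.sum_div, Finset.sum_sub_distrib, hpS]
    apply div_nonpos_of_nonpos_of_nonneg _ (le_of_lt hlog2)
    linarith
  have hsumLHS_le : ∑ a ∈ S, p a * (Real.logb 2 (q a) - Real.logb 2 (p a))
      ≤ ∑ a ∈ S, (q a - p a) / Real.log 2 := Finset.sum_le_sum hterm
  have hRHS0 : ∑ a ∈ S, (q a - p a) / Real.log 2 = 0 :=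
    le_antisymm hRHS (hE ▸ hsumLHS_le)
  have hqS1 : ∑ a ∈ S, q a = 1 := by
    have : ∑ a ∈ S, (q a - p a) = 0 := by
      have := hRHS0
      rw [← Finset.sum_div, _root_.div_eq_zero_iff] at this
      rcases this with h' | h'
      · exact h'
      · exact absurd h' (ne_of_gt hlog2)
    rw [Finset.sum_sub_distrib, hpS] at this
    linarith
  have hterm_eq : ∀ a ∈ S,
      p a * (Real.logb 2 (q a) - Real.logb 2 (p a)) = (q a - p a) / Real.log 2 := by
    rw [← Finset.sum_eq_sum_iff_of_le hterm]
    rw [hE, hRHS0]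
  -- on S : p = q
  have honS : ∀ a ∈ S, p a = q a := by
    intro a ha
    have hp' := hppos a ha
    have hq' := hqpos a ha
    by_contra hne
    have hne' : q a / p a ≠ 1 := by
      intro hc
      exact hne (by field_simp at hc; linarith)
    have hlt : Real.log (q a / p a) < q a / p a - 1 :=
      Real.log_lt_sub_one_of_pos (div_pos hq' hp') hne'
    have heq := hterm_eq a ha
    have hlb : Real.logb 2 (q a) - Real.logb 2 (p a) = Real.log (q a / p a) / Real.log 2 := by
      rw [Real.log_div (ne_of_gt hq') (ne_of_gt hp')]
      simp [Real.logb, sub_div]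
    rw [hlb] at heq
    have : p a * (Real.log (q a / p a) / Real.log 2) < (q a - p a) / Real.log 2 := by
      have h1 : p a * (Real.log (q a / p a) / Real.log 2)
          < p a * ((q a / p a - 1) / Real.log 2) := by
        apply mul_lt_mul_of_pos_left _ hp'
        exact div_lt_div_of_pos_right hlt hlog2
      refine h1.trans_eq ?_
      field_simp
    exact absurd heq (ne_of_lt this)
  -- off S : q = 0 = p
  intro a
  by_cases ha : a ∈ S
  · exact honS a ha
  · have hpa : p a = 0 := by
      by_contra hc
      exact ha (Finset.mem_filter.mpr ⟨Finset.mem_univ a, hc⟩)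
    have : ∑ b ∈ Finset.univ \ S, q b = 0 := by
      have := Finset.sum_sdiff (Finset.subset_univ S) (f := q)
      rw [hqS1, hq1] at this
      linarith
    have hqa : q a = 0 := by
      have hz := (Finset.sum_eq_zero_iff_of_nonneg (fun b _ => hq0 b)).mp this
      exact hz a (Finset.mem_sdiff.mpr ⟨Finset.mem_univ a, ha⟩)
    rw [hpa, hqa]

lemma sum_toReal_preimage {Ω : Type*} [Fintype Ω] [MeasurableSpace Ω]
    [MeasurableSingletonClass Ω] (μ : Measure Ω) [IsProbabilityMeasure μ]
    {β : Type*} [Fintype β] (Y : Ω → β) :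
    ∑ b : β, (μ (Y ⁻¹' {b})).toReal = 1 := by
  classical
  rw [← ENNReal.toReal_sum (fun b _ => measure_ne_top μ _)]
  rw [sum_measure_preimage_singleton Finset.univ
    (fun b _ => (Set.toFinite _).measurableSet)]
  simp

lemma gibbs_factorize {Ω : Type*} [Fintype Ω] [MeasurableSpace Ω] [MeasurableSingletonClass Ω]
    (μ : Measure Ω) [IsProbabilityMeasure μ]
    {k : ℕ} {A : Fin k → Type} [∀ j, Fintype (A j)]
    (X : (j : Fin k) → Ω → A j)
    (h : ∑ j, entropy μ (X j) = entropy μ (fun ω j => X j ω)) :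
    ∀ a : (j : Fin k) → A j,
      (μ ((fun ω j => X j ω) ⁻¹' {a})).toReal = ∏ j, (μ (X j ⁻¹' {a j})).toReal := by
  classical
  set T : Ω → ((j : Fin k) → A j) := fun ω j => X j ω with hT
  set p : ((j : Fin k) → A j) → ℝ := fun a => (μ (T ⁻¹' {a})).toReal with hp
  set q : (j : Fin k) → A j → ℝ := fun j b => (μ (X j ⁻¹' {b})).toReal with hq
  have hp0 : ∀ a, 0 ≤ p a := fun a => ENNReal.toReal_nonneg
  have hq0 : ∀ j b, 0 ≤ q j b := fun j b => ENNReal.toReal_nonneg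
  have hp1 : ∑ a, p a = 1 := sum_toReal_preimage μ T
  have hq1 : ∀ j, ∑ b, q j b = 1 := fun j => sum_toReal_preimage μ (X j)
  -- marginal identity
  have hmarg : ∀ (j : Fin k) (b : A j),
      q j b = ∑ a ∈ Finset.univ.filter (fun a => a j = b), p a := by
    intro j b
    have hset : X j ⁻¹' {b} = T ⁻¹' ↑(Finset.univ.filter (fun a : (j : Fin k) → A j => a j = b)) := by
      ext ω
      simp [T]
    have := sum_measure_preimage_singleton (μ := μ)
      (Finset.univ.filter (fun a : (j : Fin k) → A j => a j = b)) (f := T)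
      (fun y _ => (Set.toFinite _).measurableSet)
    rw [hq, hp]
    simp only
    rw [hset, ← this, ENNReal.toReal_sum (fun a _ => measure_ne_top μ _)]
  -- p ≤ marginals
  have hple : ∀ (a : (j : Fin k) → A j) (j : Fin k), p a ≤ q j (a j) := by
    intro a j
    apply ENNReal.toReal_mono (measure_ne_top μ _)
    apply measure_mono
    intro ω hω
    have : T ω = a := hω
    simp only [Set.mem_preimage, Set.mem_singleton_iff]
    exact congrFun this j
  set Q : ((j : Fin k) → A j) → ℝ := fun a => ∏ j, q j (a j) with hQ
  have hQ1 : ∑ a, Q a = 1 := by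
    rw [hQ]
    simp only
    rw [← Fintype.piFinset_univ, ← Finset.prod_univ_sum]
    simp [hq1]
  have hQpos : ∀ a, p a ≠ 0 → Q a ≠ 0 := by
    intro a hpa
    have hppos : 0 < p a := lt_of_le_of_ne (hp0 a) (Ne.symm hpa)
    have : 0 < Q a := Finset.prod_pos (fun j _ => lt_of_lt_of_le hppos (hple a j))
    exact ne_of_gt this
  -- cross entropy identity
  have hcross : ∑ j, entropy μ (X j) = -∑ a, p a * Real.logb 2 (Q a) := by
    have h1 : ∀ j : Fin k, entropy μ (X j) = -∑ a, p a * Real.logb 2 (q j (a j)) := by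
      intro j
      have : entropy μ (X j) = -∑ b, q j b * Real.logb 2 (q j b) := rfl
      rw [this]
      congr 1
      rw [← Finset.sum_fiberwise (Finset.univ) (fun a : (j : Fin k) → A j => a j)
        (fun a => p a * Real.logb 2 (q j (a j)))]
      apply Finset.sum_congr rfl
      intro b _
      have heq : ∑ a ∈ Finset.univ.filter (fun a : (j : Fin k) → A j => a j = b),
          p a * Real.logb 2 (q j (a j))
          = ∑ a ∈ Finset.univ.filter (fun a : (j : Fin k) → A j => a j = b),
          p a * Real.logb 2 (q j b) := by
        apply Finset.sum_congr rfl
        intro a ha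
        rw [(Finset.mem_filter.mp ha).2]
      rw [heq, ← Finset.sum_mul, ← hmarg j b]
    calc ∑ j, entropy μ (X j) = ∑ j, -∑ a, p a * Real.logb 2 (q j (a j)) := by
          exact Finset.sum_congr rfl (fun j _ => h1 j)
      _ = -∑ j, ∑ a, p a * Real.logb 2 (q j (a j)) := by rw [Finset.sum_neg_distrib]
      _ = -∑ a, ∑ j, p a * Real.logb 2 (q j (a j)) := by rw [Finset.sum_comm]
      _ = -∑ a, p a * ∑ j, Real.logb 2 (q j (a j)) := by
          congr 1; exact Finset.sum_congr rfl (fun a _ => by rw [Finset.mul_sum])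
      _ = -∑ a, p a * Real.logb 2 (Q a) := by
          congr 1
          apply Finset.sum_congr rfl
          intro a _
          by_cases hpa : p a = 0
          · simp [hpa]
          · have hppos : 0 < p a := lt_of_le_of_ne (hp0 a) (Ne.symm hpa)
            have hqne : ∀ j ∈ Finset.univ, q j (a j) ≠ 0 :=
              fun j _ => ne_of_gt (lt_of_lt_of_le hppos (hple a j))
            rw [hQ]
            simp only
            rw [Real.logb_prod Finset.univ _ hqne]
  have hTent : entropy μ T = -∑ a, p a * Real.logb 2 (p a) := rfl
  have hmain : ∑ a, p a * Real.logb 2 (p a) = ∑ a, p a * Real.logb 2 (Q a) := by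
    have := h
    rw [hcross, hTent] at this
    linarith
  exact gibbs_aux p Q hp0 (fun a => Finset.prod_nonneg (fun j _ => hq0 j (a j)))
    hQpos hp1 hQ1 hmain

lemma uniform_pos_iff {Ω : Type*} [Fintype Ω] [Nonempty Ω] [MeasurableSpace Ω]
    [MeasurableSingletonClass Ω] (s : Set Ω) :
    0 < ((PMF.uniformOfFintype Ω).toMeasure s).toReal ↔ s.Nonempty := by
  rw [ENNReal.toReal_pos_iff]
  constructor
  · rintro ⟨h0, -⟩
    by_contra hne
    rw [Set.not_nonempty_iff_eq_empty] at hne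
    subst hne
    simp at h0
  · intro hne
    refine ⟨?_, ?_⟩
    · rw [pos_iff_ne_zero]
      intro hz
      rw [PMF.toMeasure_apply_eq_zero_iff _ (Set.toFinite s).measurableSet] at hz
      rw [PMF.support_uniformOfFintype] at hz
      obtain ⟨x, hx⟩ := hne
      exact (Set.disjoint_left.mp hz (Set.mem_univ x)) hx
    · exact measure_lt_top ((PMF.uniformOfFintype Ω).toMeasure) s

lemma nat_ineq_of_ennreal {e l m n : ℕ} (hl : 0 < l) (hn : 0 < n) (hmn : m ≤ n)
    (h : (l : ℝ≥0∞)⁻¹ * e < 1 - (m : ℝ≥0∞) / n) : e * n < l * (n - m) := by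
  have hn0 : (n : ℝ≥0∞) ≠ 0 := Nat.cast_ne_zero.mpr hn.ne'
  have hl0 : (l : ℝ≥0∞) ≠ 0 := Nat.cast_ne_zero.mpr hl.ne'
  have hdiv : ((n - m : ℕ) : ℝ≥0∞) / n + (m : ℝ≥0∞) / n = 1 := by
    rw [ENNReal.div_add_div_same]
    have hc : ((n - m : ℕ) : ℝ≥0∞) + (m : ℕ) = (n : ℕ) := by
      rw [← Nat.cast_add, Nat.sub_add_cancel hmn]
    rw [hc, ENNReal.div_self hn0 (by simp)]
  have hone : 1 - (m : ℝ≥0∞) / n = ((n - m : ℕ) : ℝ≥0∞) / n := by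
    refine (ENNReal.eq_sub_of_add_eq ?_ hdiv).symm
    exact (ENNReal.div_lt_top (by simp) hn0).ne
  rw [hone, ← ENNReal.div_eq_inv_mul] at h
  have hfin1 : ((e : ℝ≥0∞) / l) ≠ ⊤ := (ENNReal.div_lt_top (by simp) hl0).ne
  have hfin2 : (((n - m : ℕ) : ℝ≥0∞) / n) ≠ ⊤ := (ENNReal.div_lt_top (by simp) hn0).ne
  have hr := (ENNReal.toReal_lt_toReal hfin1 hfin2).mpr h
  rw [ENNReal.toReal_div, ENNReal.toReal_div] at hr
  simp only [ENNReal.toReal_natCast] at hr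
  have hlr : (0:ℝ) < l := by exact_mod_cast hl
  have hnr : (0:ℝ) < n := by exact_mod_cast hn
  rw [div_lt_div_iff₀ hlr hnr] at hr
  have hfin : (e : ℝ) * n < l * ((n - m : ℕ) : ℝ) := by linarith
  exact_mod_cast hfin

/-- Theorem 8: with `m ≤ k/2` and `m ∣ n`, partition the `n` messages into `n/m`
disjoint groups of size `m` (the fibers of `grp`).  If every `k` of the `n` messages
`f i` are mutually independent under the i.i.d. uniform binary source (multi-letter
mutual information zero), and each group reconstruction `g G` is a function of the
messages in group `G` producing an erased version of the source string, then some group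
reconstruction suffers worst-case erasure distortion at least `1 − m/n`; hence
`D_m ≥ 1 − m/n`. -/
theorem stmt_17 (n k m l : ℕ) (hk : 1 ≤ k) (hkn : k ≤ n) (hm : 1 ≤ m)
    (hmk : 2 * m ≤ k) (hdvd : m ∣ n) (hl : 1 ≤ l)
    (F : Fin n → Type) [∀ i, Fintype (F i)]
    (f : (i : Fin n) → (Fin l → Bool) → F i)
    (grp : Fin n → Fin (n / m))
    (hgrp : ∀ G, (Finset.univ.filter (fun i => grp i = G)).card = m)
    (g : Fin (n / m) → (Fin l → Bool) → (Fin l → Option Bool))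
    (hfact : ∀ G x y, (∀ i, grp i = G → f i x = f i y) → g G x = g G y)
    (herased : ∀ G x t b, g G x t = some b → x t = b)
    (hindep : ∀ s : Fin k → Fin n, Function.Injective s →
      (∑ j, entropy (PMF.uniformOfFintype (Fin l → Bool)).toMeasure
          (fun x => f (s j) x))
        - entropy (PMF.uniformOfFintype (Fin l → Bool)).toMeasure
            (fun x j => f (s j) x) = 0) :
    ∃ G, ∃ x : Fin l → Bool,
      1 - (m : ℝ≥0∞)/n ≤ (l : ℝ≥0∞)⁻¹ * ∑ t, erasureDist (x t) (g G x t) := by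
  classical
  set μ := (PMF.uniformOfFintype (Fin l → Bool)).toMeasure with hμ
  have hmn : m ≤ n := le_trans (le_trans (by omega) hmk) hkn
  have hn : 0 < n := by omega
  have hnm : 0 < n / m := Nat.div_pos hmn hm
  -- Key pairwise exclusion lemma
  have key : ∀ (t : Fin l) (G G' : Fin (n / m)) (x y : Fin l → Bool) (v w : Bool),
      G ≠ G' → g G x t = some v → g G' y t = some w → v = w := by
    intro t G G' x y v w hGG' hvx hwy
    -- build an injective k-tuple covering both groups
    set S₁ := Finset.univ.filter (fun i => grp i = G) with hS₁
    set S₂ := Finset.univ.filter (fun i => grp i = G') with hS₂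
    have hdisj : Disjoint S₁ S₂ := by
      rw [Finset.disjoint_left]
      intro i h1 h2
      rw [hS₁, Finset.mem_filter] at h1
      rw [hS₂, Finset.mem_filter] at h2
      exact hGG' (h1.2 ▸ h2.2 ▸ rfl)
    have hcard : (S₁ ∪ S₂).card = 2 * m := by
      rw [Finset.card_union_of_disjoint hdisj, hgrp, hgrp]
      ring
    obtain ⟨K, hKsub, hKcard⟩ := Finset.exists_superset_card_eq
      (hcard ▸ hmk) (by simpa using hkn)
    have e : Fin k ≃ {x // x ∈ K} := (K.equivFin.trans (finCongr hKcard)).symm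
    set s : Fin k → Fin n := fun j => (e j : Fin n) with hs
    have hsinj : Function.Injective s := by
      intro a b hab
      exact e.injective (Subtype.ext hab)
    have hcover : ∀ i ∈ K, ∃ j, s j = i := by
      intro i hi
      refine ⟨e.symm ⟨i, hi⟩, ?_⟩
      simp [hs]
    -- factorization
    have hfac := gibbs_factorize μ (fun j => f (s j))
      (sub_eq_zero.mp (hindep s hsinj))
    set c : (j : Fin k) → F (s j) :=
      fun j => if grp (s j) = G then f (s j) x else f (s j) y with hc
    have hqpos : ∀ j, 0 < (μ ((fun ω => f (s j) ω) ⁻¹' {c j})).toReal := by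
      intro j
      rw [hμ, uniform_pos_iff]
      by_cases hj : grp (s j) = G
      · exact ⟨x, by simp [hc, hj]⟩
      · exact ⟨y, by simp [hc, hj]⟩
    have hppos : 0 < (μ ((fun ω j => f (s j) ω) ⁻¹' {c})).toReal := by
      rw [hfac c]
      exact Finset.prod_pos (fun j _ => hqpos j)
    obtain ⟨z, hz⟩ := (uniform_pos_iff _).mp (hμ ▸ hppos)
    have hzj : ∀ j, f (s j) z = c j := fun j => congrFun hz j
    have hgz : g G z = g G x := by
      apply hfact
      intro i hi
      have hiK : i ∈ K := hKsub (Finset.mem_union_left _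
        (by rw [hS₁, Finset.mem_filter]; exact ⟨Finset.mem_univ i, hi⟩))
      obtain ⟨j, rfl⟩ := hcover i hiK
      rw [hzj j, hc]
      simp [hi]
    have hgz' : g G' z = g G' y := by
      apply hfact
      intro i hi
      have hiK : i ∈ K := hKsub (Finset.mem_union_right _
        (by rw [hS₂, Finset.mem_filter]; exact ⟨Finset.mem_univ i, hi⟩))
      obtain ⟨j, rfl⟩ := hcover i hiK
      rw [hzj j, hc]
      have : ¬ (grp (s j) = G) := by rw [hi]; exact fun hcc => hGG' hcc.symm
      simp [this]
    have h1 : z t = v := herased G z t v (by rw [hgz]; exact hvx)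
    have h2 : z t = w := herased G' z t w (by rw [hgz']; exact hwy)
    rw [← h1, ← h2]
  -- adversarial source string
  set xs : Fin l → Bool :=
    fun t => if ∃ G x, g G x t = some true then false else true with hxs
  -- uniqueness of revealing group
  have uniq : ∀ (t : Fin l) (G₁ G₂ : Fin (n / m)),
      g G₁ xs t ≠ none → g G₂ xs t ≠ none → G₁ = G₂ := by
    intro t G₁ G₂ h1 h2
    obtain ⟨b₁, hb₁⟩ := Option.ne_none_iff_exists'.mp h1
    obtain ⟨b₂, hb₂⟩ := Option.ne_none_iff_exists'.mp h2
    have hx1 : xs t = b₁ := herased _ _ _ _ hb₁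
    have hx2 : xs t = b₂ := herased _ _ _ _ hb₂
    by_cases hT : ∃ G x, g G x t = some true
    · have hfalse : xs t = false := by rw [hxs]; simp [hT]
      obtain ⟨G₀, x₀, h₀⟩ := hT
      by_contra hne
      rcases eq_or_ne G₁ G₀ with hG | hG
      · have hne2 : G₀ ≠ G₂ := fun hc => hne (hG.trans hc)
        have := key t G₀ G₂ x₀ xs true b₂ hne2 h₀ hb₂
        rw [← hx2, hfalse] at this
        exact Bool.noConfusion this
      · have := key t G₀ G₁ x₀ xs true b₁ (Ne.symm hG) h₀ hb₁
        rw [← hx1, hfalse] at this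
        exact Bool.noConfusion this
    · exfalso
      apply hT
      refine ⟨G₁, xs, ?_⟩
      have htrue : xs t = true := by rw [hxs]; simp [hT]
      rw [hb₁, ← hx1, htrue]
  -- contradiction setup
  by_contra hcon
  push_neg at hcon
  -- erasure counts
  set eG : Fin (n / m) → ℕ :=
    fun G => (Finset.univ.filter (fun t => g G xs t = none)).card with heG
  set rG : Fin (n / m) → ℕ :=
    fun G => (Finset.univ.filter (fun t => ¬ g G xs t = none)).card with hrG
  have hsplit : ∀ G, eG G + rG G = l := by
    intro G
    rw [heG, hrG]
    simp only
    rw [Finset.card_filter_add_card_filter_not]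
    simp
  have hsum : ∀ G, ∑ t, erasureDist (xs t) (g G xs t) = (eG G : ℝ≥0∞) := by
    intro G
    rw [heG]
    simp only
    rw [← Finset.sum_boole]
    apply Finset.sum_congr rfl
    intro t _
    cases hgt : g G xs t with
    | none => simp [erasureDist, hgt]
    | some b =>
      have hb : xs t = b := herased G xs t b hgt
      simp [erasureDist, hgt, hb]
  have hnat : ∀ G, eG G * n < l * (n - m) := by
    intro G
    have := hcon G xs
    rw [hsum G] at this
    exact nat_ineq_of_ennreal hl hn hmn this
  have hlm : ∀ G, l * m < rG G * n := by
    intro G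
    have h1 : eG G * n + rG G * n = l * n := by
      rw [← add_mul, hsplit G]
    have h2 : l * m + l * (n - m) = l * n := by
      rw [← mul_add, Nat.add_sub_cancel' hmn]
    have h3 := hnat G
    omega
  -- upper bound : ∑ rG ≤ l
  have hup : ∑ G, rG G ≤ l := by
    have hcardform : ∀ G, rG G = ∑ t, if ¬ g G xs t = none then 1 else 0 := by
      intro G
      rw [hrG]
      simp only
      rw [Finset.sum_boole]
      simp
    calc ∑ G, rG G = ∑ G, ∑ t, if ¬ g G xs t = none then 1 else 0 :=
          Finset.sum_congr rfl (fun G _ => hcardform G)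
      _ = ∑ t, ∑ G, if ¬ g G xs t = none then 1 else 0 := Finset.sum_comm
      _ ≤ ∑ t : Fin l, 1 := by
          apply Finset.sum_le_sum
          intro t _
          rw [Finset.sum_boole]
          have : (Finset.univ.filter (fun G => ¬ g G xs t = none)).card ≤ 1 := by
            apply Finset.card_le_one.mpr
            intro a ha b hb
            exact uniq t a b (Finset.mem_filter.mp ha).2 (Finset.mem_filter.mp hb).2
          exact_mod_cast this
      _ = l := by simp
  -- lower bound : l < ∑ rG
  have hlow : l < ∑ G, rG G := by
    have hne : (Finset.univ : Finset (Fin (n / m))).Nonempty := by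
      have : Nonempty (Fin (n / m)) := ⟨⟨0, hnm⟩⟩
      exact Finset.univ_nonempty
    have hstep : ∑ _G : Fin (n / m), l * m < ∑ G, rG G * n :=
      Finset.sum_lt_sum_of_nonempty hne (fun G _ => hlm G)
    rw [Finset.sum_const, Finset.card_univ, Fintype.card_fin, smul_eq_mul] at hstep
    rw [← Finset.sum_mul] at hstep
    have hln : n / m * (l * m) = l * n := by
      rw [mul_comm l m, ← mul_assoc, Nat.div_mul_cancel hdvd, mul_comm]
    rw [hln] at hstep
    exact Nat.lt_of_mul_lt_mul_right hstep
  omega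
end
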